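/- arXiv:2111.04902 — 9 statements merged into one kernel-verified Lean document; each statement's English description precedes it below -/
import Mathlib

section
/- Let G be a finite simple graph and M a nonempty set of vertices of G. Then the expansion (G/M) ·_[M] G[M] equals G if and only if every vertex v ∉ M is adjacent to all vertices of M or to none of them. -/
/-- The expansion `(G/M) ·_[M] G[M]` of a simple graph `G` at a nonempty vertex set
`M`, described directly on the vertex set of `G`: two vertices outside `M` are
adjacent iff they are adjacent in `G` (equivalently in `G/M`), two vertices of `M`
are adjacent iff they are adjacent in `G` (i.e. in `G[M]`), and a vertex `v ∉ M` is
adjacent to a vertex `m ∈ M` iff `v` is adjacent to `[M]` in `G/M`, i.e. iff `v` is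
adjacent in `G` to some vertex of `M`. -/
def graphExpansion {V : Type*} (G : SimpleGraph V) (M : Set V) : SimpleGraph V where
  Adj u v :=
    ((u ∈ M ↔ v ∈ M) ∧ G.Adj u v) ∨
    (u ∉ M ∧ v ∈ M ∧ ∃ w ∈ M, G.Adj u w) ∨
    (u ∈ M ∧ v ∉ M ∧ ∃ w ∈ M, G.Adj v w)
  symm := by
    constructor
    intro u v h
    rcases h with ⟨h1, h2⟩ | ⟨h1, h2, h3⟩ | ⟨h1, h2, h3⟩
    · exact Or.inl ⟨h1.symm, h2.symm⟩
    · exact Or.inr (Or.inr ⟨h2, h1, h3⟩)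
    · exact Or.inr (Or.inl ⟨h2, h1, h3⟩)
  loopless := by
    constructor
    intro u h
    rcases h with ⟨_, h2⟩ | ⟨h1, h2, _⟩ | ⟨h1, h2, _⟩
    · exact G.irrefl h2
    · exact h1 h2
    · exact h2 h1

/-- For a finite simple graph `G` and a nonempty set `M` of
vertices, the expansion `(G/M) ·_[M] G[M]` equals `G` iff every vertex outside `M`
is adjacent to all vertices of `M` or to none of them. -/
theorem stmt0 {V : Type*} [Fintype V] (G : SimpleGraph V) (M : Set V) (hM : M.Nonempty) :
    graphExpansion G M = G ↔
      ∀ v ∉ M, (∀ m ∈ M, G.Adj v m) ∨ (∀ m ∈ M, ¬ G.Adj v m) := by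
  constructor
  · intro h v hv
    by_cases hex : ∃ w ∈ M, G.Adj v w
    · left
      intro m hm
      have : (graphExpansion G M).Adj v m := Or.inr (Or.inl ⟨hv, hm, hex⟩)
      rwa [h] at this
    · right
      intro m hm hadj
      exact hex ⟨m, hm, hadj⟩
  · intro h
    ext u v
    constructor
    · rintro (⟨_, h2⟩ | ⟨h1, h2, w, hw, hadj⟩ | ⟨h1, h2, w, hw, hadj⟩)
      · exact h2
      · rcases h u h1 with hall | hnone
        · exact hall v h2
        · exact absurd hadj (hnone w hw)
      · rcases h v h2 with hall | hnone
        · exact (hall u h1).symm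
        · exact absurd hadj (hnone w hw)
    · intro hadj
      by_cases hu : u ∈ M <;> by_cases hv : v ∈ M
      · exact Or.inl ⟨by simp [hu, hv], hadj⟩
      · exact Or.inr (Or.inr ⟨hu, hv, u, hu, hadj.symm⟩)
      · exact Or.inr (Or.inl ⟨hu, hv, v, hv, hadj⟩)
      · exact Or.inl ⟨by simp [hu, hv], hadj⟩
end

section
/- Let Z = (Q, Σ, δ, s) be an FSM and M a nonempty subset of Q. Then the following are equivalent: (i) M is a module of Z, i.e., all entrances of M coincide and, if s ∈ M, every entrance of M equals s, and for each x ∈ Σ, if M has an x-exit then M has exactly one x-exit and δ(u, x) is defined for every u ∈ M; (ii) there exists q ∈ M such that the contraction relation of M is single-valued (so the contraction Z/M is a well-defined FSM) and the expansion (Z/M) ·_[M] Z[M, q] equals Z. -/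
open Classical

universe u v

variable {Q : Type u} {E : Type v}

/-- `u` is an entrance of `M`: `u ∈ M` receives an arc from outside `M`. -/
def IsEntrance (δ : Q → E → Option Q) (M : Set Q) (u : Q) : Prop :=
  u ∈ M ∧ ∃ x : E, ∃ v : Q, v ∉ M ∧ δ v x = some u

/-- `v` is an `x`-exit of `M`. -/
def IsExit (δ : Q → E → Option Q) (M : Set Q) (x : E) (v : Q) : Prop :=
  v ∉ M ∧ ∃ u ∈ M, δ u x = some v

/-- `M` is a module of the FSM `(Q, E, δ, s)`. -/
def IsFsmModule (δ : Q → E → Option Q) (s : Q) (M : Set Q) : Prop :=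
  M.Nonempty ∧
  (∀ u v : Q, IsEntrance δ M u → IsEntrance δ M v → u = v) ∧
  (s ∈ M → ∀ u : Q, IsEntrance δ M u → u = s) ∧
  ∀ x : E, (∃ v, IsExit δ M x v) →
    ((∀ v w : Q, IsExit δ M x v → IsExit δ M x w → v = w) ∧ ∀ u ∈ M, (δ u x).isSome)

/-- `M` contains an `x`-cycle. -/
def HasXCycleIn (δ : Q → E → Option Q) (x : E) (M : Set Q) : Prop :=
  ∃ q ∈ M, Relation.TransGen (fun a b => a ∈ M ∧ δ a x = some b) q q

/-- `M` is a thin module. -/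
def IsThinModule (δ : Q → E → Option Q) (s : Q) (M : Set Q) : Prop :=
  IsFsmModule δ s M ∧ ∀ x : E, (¬ ∃ v, IsExit δ M x v) ∨ ¬ HasXCycleIn δ x M

/-- One transition step of the FSM, as a digraph arc. -/
def FsmStep (δ : Q → E → Option Q) (u v : Q) : Prop := ∃ x : E, δ u x = some v

/-- Reachability by a directed path. -/
def Reaches (δ : Q → E → Option Q) : Q → Q → Prop := Relation.ReflTransGen (FsmStep δ)

/-- Every state is reachable from the start state. -/
def Accessible (δ : Q → E → Option Q) (s : Q) : Prop := ∀ q : Q, Reaches δ s q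

/-- `σ` is the start node of the module `M`. -/
def IsStartNode (δ : Q → E → Option Q) (s : Q) (M : Set Q) (σ : Q) : Prop :=
  (s ∈ M ∧ σ = s) ∨ (s ∉ M ∧ IsEntrance δ M σ)

/-- Two sets overlap. -/
def Overlap {α : Type*} (X Y : Set α) : Prop :=
  (X ∩ Y).Nonempty ∧ ¬ X ⊆ Y ∧ ¬ Y ⊆ X

/-- A collection of sets is overlapping: across every partition into two
nonempty blocks there is an overlapping pair. -/
def OverlapColl {α : Type*} (S : Set (Set α)) : Prop :=
  ∀ T ⊆ S, T.Nonempty → (S \ T).Nonempty → ∃ a ∈ T, ∃ b ∈ S \ T, Overlap a b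

/-- `M` is decomposable with respect to the family `F`. -/
def Decomposable {α : Type*} (F : Set (Set α)) (M : Set α) : Prop :=
  ∃ S : Set (Set α), S ⊆ F ∧ OverlapColl S ∧ ⋃₀ S = M ∧ ∃ a ∈ S, ∃ b ∈ S, a ≠ b

/-- `M` is an indecomposable member of the family `F`. -/
def Indecomposable {α : Type*} (F : Set (Set α)) (M : Set α) : Prop :=
  M ∈ F ∧ ¬ Decomposable F M

/-- `M` is an indecomposable thin module of the FSM. -/
def IndecompThin (δ : Q → E → Option Q) (s : Q) (M : Set Q) : Prop :=
  Indecomposable {N : Set Q | IsThinModule δ s N} M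

/-- The contraction relation of `M`: the transition relation of `Z/M` on the state
set `(Q \ M) ∪ {[M]}`, where the fresh state `[M]` is modelled by `none` and a state
`u ∉ M` by `some u`. -/
def ContrRel (δ : Q → E → Option Q) (M : Set Q) : Option Q → E → Option Q → Prop :=
  fun u x v =>
    match u, v with
    | some u, some v => u ∉ M ∧ v ∉ M ∧ δ u x = some v
    | some u, none => u ∉ M ∧ ∃ m ∈ M, δ u x = some m
    | none, some v => v ∉ M ∧ ∃ w ∈ M, δ w x = some v
    | none, none => False

/-- The transition function of the expansion `(Z/M) ·_[M] Z[M, q]`, described as a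
relation on the state set `Q` (assuming the contraction relation is single-valued):
for `u ∉ M` the transitions of `Z/M` are used, transitions of `Z/M` into `[M]`
being redirected to the start state `q` of `Z[M, q]`; for `u ∈ M` the transitions
of `Z[M, q]` are used when defined, and otherwise the transitions of `Z/M` out of
`[M]` (which never lead back to `[M]`). -/
def ExpRel (δ : Q → E → Option Q) (M : Set Q) (q : Q) (u : Q) (x : E) (v : Q) : Prop :=
  (u ∈ M ∧ ((v ∈ M ∧ δ u x = some v) ∨
    ((¬ ∃ m ∈ M, δ u x = some m) ∧ v ∉ M ∧ ∃ w ∈ M, δ w x = some v))) ∨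
  (u ∉ M ∧ ((v ∉ M ∧ δ u x = some v) ∨ (v = q ∧ ∃ m ∈ M, δ u x = some m)))

/-- For an FSM `Z = (Q, E, δ, s)` and a nonempty `M ⊆ Q`, `M` is a
module of `Z` iff there is a `q ∈ M` such that the contraction relation of `M` is
single-valued (so `Z/M` is a well-defined FSM) and the expansion
`(Z/M) ·_[M] Z[M, q]` equals `Z`, i.e. its transition relation agrees exactly with
`δ` and its start state (`q` if `s ∈ M`, and `s` otherwise) equals `s`. -/
theorem stmt1 [Fintype Q] (δ : Q → E → Option Q) (s : Q) (M : Set Q) (hM : M.Nonempty) :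
    IsFsmModule δ s M ↔
      ∃ q ∈ M,
        (∀ (u : Option Q) (x : E) (v w : Option Q),
            ContrRel δ M u x v → ContrRel δ M u x w → v = w) ∧
        (∀ (u : Q) (x : E) (v : Q), ExpRel δ M q u x v ↔ δ u x = some v) ∧
        (s ∈ M → q = s) := by
  constructor
  · rintro ⟨-, hent, hents, hexit⟩
    have hq : ∃ q ∈ M, (s ∈ M → q = s) ∧ ∀ m, IsEntrance δ M m → m = q := by
      by_cases hs : s ∈ M
      · exact ⟨s, hs, fun _ => rfl, fun m hm => hents hs m hm⟩
      · by_cases he : ∃ m, IsEntrance δ M m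
        · obtain ⟨m, hm⟩ := he
          exact ⟨m, hm.1, fun h => absurd h hs, fun m' hm' => hent m' m hm' hm⟩
        · obtain ⟨q, hqM⟩ := hM
          exact ⟨q, hqM, fun h => absurd h hs, fun m hm => absurd ⟨m, hm⟩ he⟩
    obtain ⟨q, hqM, hqs, hkey⟩ := hq
    refine ⟨q, hqM, ?_, ?_, hqs⟩
    · rintro u x v w hv hw
      match u, v, w with
      | some u, some v, some w =>
        obtain ⟨-, -, h1⟩ := hv; obtain ⟨-, -, h2⟩ := hw
        rw [h1] at h2; exact h2
      | some u, some v, none =>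
        obtain ⟨-, hv2, h1⟩ := hv; obtain ⟨-, m, hm, h2⟩ := hw
        rw [h1] at h2; injection h2 with h2; exact absurd (h2 ▸ hm) hv2
      | some u, none, some w =>
        obtain ⟨-, m, hm, h1⟩ := hv; obtain ⟨-, hw2, h2⟩ := hw
        rw [h1] at h2; injection h2 with h2; exact absurd (h2 ▸ hm) hw2
      | some u, none, none => rfl
      | none, some v, some w =>
        obtain ⟨hvM, a, haM, ha⟩ := hv
        obtain ⟨hwM, b, hbM, hb⟩ := hw
        have := (hexit x ⟨v, hvM, a, haM, ha⟩).1 v w ⟨hvM, a, haM, ha⟩ ⟨hwM, b, hbM, hb⟩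
        rw [this]
      | none, some v, none => exact absurd hw id
      | none, none, some w => exact absurd hv id
      | none, none, none => rfl
    · intro u x v
      by_cases hu : u ∈ M
      · constructor
        · rintro (⟨-, h⟩ | ⟨hu', -⟩)
          · rcases h with ⟨-, hd⟩ | ⟨hnot, hvM, w, hwM, hw⟩
            · exact hd
            · have hex := hexit x ⟨v, hvM, w, hwM, hw⟩
              have hsome := hex.2 u hu
              obtain ⟨z, hz⟩ := Option.isSome_iff_exists.mp hsome
              have hzM : z ∉ M := fun hzM => hnot ⟨z, hzM, hz⟩
              have := hex.1 z v ⟨hzM, u, hu, hz⟩ ⟨hvM, w, hwM, hw⟩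
              rw [← this]; exact hz
          · exact absurd hu hu'
        · intro hd
          left
          refine ⟨hu, ?_⟩
          by_cases hv : v ∈ M
          · exact Or.inl ⟨hv, hd⟩
          · refine Or.inr ⟨?_, hv, u, hu, hd⟩
            rintro ⟨m, hm, he⟩
            rw [hd] at he; injection he with he; exact hv (he ▸ hm)
      · constructor
        · rintro (⟨hu', -⟩ | ⟨-, h⟩)
          · exact absurd hu' hu
          · rcases h with ⟨-, hd⟩ | ⟨hvq, m, hmM, hd⟩
            · exact hd
            · have : m = q := hkey m ⟨hmM, x, u, hu, hd⟩
              rw [hvq, ← this]; exact hd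
        · intro hd
          right
          refine ⟨hu, ?_⟩
          by_cases hv : v ∈ M
          · exact Or.inr ⟨(hkey v ⟨hv, x, u, hu, hd⟩), v, hv, hd⟩
          · exact Or.inl ⟨hv, hd⟩
  · rintro ⟨q, hqM, hsv, hexp, hqs⟩
    have hkey : ∀ m, IsEntrance δ M m → m = q := by
      rintro m ⟨hmM, x, a, haM, ha⟩
      have := (hexp a x m).2 ha
      rcases this with ⟨haM', -⟩ | ⟨-, h⟩
      · exact absurd haM' haM
      · rcases h with ⟨hmM', -⟩ | ⟨hq, -⟩
        · exact absurd hmM hmM'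
        · exact hq
    refine ⟨hM, ?_, ?_, ?_⟩
    · intro u v hu hv
      rw [hkey u hu, hkey v hv]
    · intro hs u hu
      rw [hkey u hu, hqs hs]
    · rintro x ⟨v, hvM, w, hwM, hw⟩
      constructor
      · rintro a b ⟨haM, u1, hu1, h1⟩ ⟨hbM, u2, hu2, h2⟩
        have := hsv none x (some a) (some b) ⟨haM, u1, hu1, h1⟩ ⟨hbM, u2, hu2, h2⟩
        injection this
      · intro u huM
        by_cases hd : ∃ m ∈ M, δ u x = some m
        · obtain ⟨m, -, hm⟩ := hd
          rw [hm]; rfl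
        · have : ExpRel δ M q u x v := Or.inl ⟨huM, Or.inr ⟨hd, hvM, w, hwM, hw⟩⟩
          rw [(hexp u x v).1 this]; rfl
end

section
/- Let Z be an accessible FSM, X a module of Z with start node σ_X, and Z[X] the FSM with state set X, start state σ_X, and transitions δ restricted to pairs staying in X (δ_X(u, x) = v iff u, v ∈ X and δ(u, x) = v). Then for every Y ⊆ X, Y is a module of Z if and only if Y is a module of Z[X]. -/
open Classical

universe u v

variable {Q : Type u} {E : Type v}

/-- The transition function of the restriction `Z[X]`: transitions of `δ` that
start and stay in `X`. -/
noncomputable def restrictδ (δ : Q → E → Option Q) (X : Set Q) : Q → E → Option Q :=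
  fun u x => (δ u x).bind (fun v => if u ∈ X ∧ v ∈ X then some v else none)

lemma restrict_some_iff (δ : Q → E → Option Q) (X : Set Q)
    (u : Q) (x : E) (v : Q) :
    restrictδ δ X u x = some v ↔ δ u x = some v ∧ u ∈ X ∧ v ∈ X := by
  cases h : δ u x with
  | none => simp [restrictδ, h]
  | some w =>
    simp only [restrictδ, h, Option.bind_some]
    split
    · next hc =>
      simp only [Option.some.injEq]
      exact ⟨fun hw => ⟨hw, hc.1, hw ▸ hc.2⟩, fun hw => hw.1⟩
    · next hc =>
      simp only [Option.some.injEq]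
      constructor
      · intro h'; exact absurd h' (by simp)
      · rintro ⟨rfl, h1, h2⟩
        exact absurd ⟨h1, h2⟩ hc

/-- Let `Z` be an accessible FSM, `X` a module of `Z` with start
node `σ`, and `Z[X]` the restriction of `Z` to `X` (with start state `σ`). Then for
every `Y ⊆ X`, `Y` is a module of `Z` iff `Y` is a module of `Z[X]`. -/
theorem stmt3 [Fintype Q] (δ : Q → E → Option Q) (s : Q) (hacc : Accessible δ s)
    (X : Set Q) (hX : IsFsmModule δ s X) (σ : Q) (hσ : IsStartNode δ s X σ)
    (Y : Set Q) (hYX : Y ⊆ X) :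
    IsFsmModule δ s Y ↔ IsFsmModule (restrictδ δ X) σ Y := by
  obtain ⟨hXne, hXent, hXs, hXexit⟩ := hX
  have hσX : σ ∈ X := by
    rcases hσ with ⟨hs, rfl⟩ | ⟨_, hent⟩
    · exact hs
    · exact hent.1
  have hentσ : ∀ u, IsEntrance δ X u → u = σ := by
    intro u hu
    rcases hσ with ⟨hs, rfl⟩ | ⟨hns, hent⟩
    · exact hXs hs u hu
    · exact hXent u σ hu hent
  have hRtoZ : ∀ u, IsEntrance (restrictδ δ X) Y u → IsEntrance δ Y u := by
    rintro u ⟨huY, x, v, hvY, hv⟩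
    rw [restrict_some_iff] at hv
    exact ⟨huY, x, v, hvY, hv.1⟩
  have hZtoR : ∀ u, IsEntrance δ Y u →
      IsEntrance (restrictδ δ X) Y u ∨ u = σ := by
    rintro u ⟨huY, x, v, hvY, hv⟩
    by_cases hvX : v ∈ X
    · exact Or.inl ⟨huY, x, v, hvY, (restrict_some_iff δ X v x u).mpr ⟨hv, hvX, hYX huY⟩⟩
    · exact Or.inr (hentσ u ⟨hYX huY, x, v, hvX, hv⟩)
  constructor
  · rintro ⟨hne, hent, hs, hexit⟩
    refine ⟨hne, ?_, ?_, ?_⟩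
    · intro u v hu hv
      exact hent u v (hRtoZ u hu) (hRtoZ v hv)
    · intro hσY u hu
      have hu' := hRtoZ u hu
      rcases hσ with ⟨hsX, rfl⟩ | ⟨hns, hentX⟩
      · exact hs hσY u hu'
      · obtain ⟨_, x, v, hvX, hv⟩ := hentX
        have hσent : IsEntrance δ Y σ := ⟨hσY, x, v, fun h => hvX (hYX h), hv⟩
        exact hent u σ hu' hσent
    · rintro x ⟨v, hvexit⟩
      obtain ⟨hvY, u', hu'Y, hu'⟩ := hvexit
      rw [restrict_some_iff] at hu'
      have hvX : v ∈ X := hu'.2.2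
      have hvZ : IsExit δ Y x v := ⟨hvY, u', hu'Y, hu'.1⟩
      obtain ⟨huniq, hdef⟩ := hexit x ⟨v, hvZ⟩
      have key : ∀ c, IsExit (restrictδ δ X) Y x c → IsExit δ Y x c := by
        rintro c ⟨hcY, u, huY, hu⟩
        rw [restrict_some_iff] at hu
        exact ⟨hcY, u, huY, hu.1⟩
      refine ⟨fun a b ha hb => huniq a b (key a ha) (key b hb), ?_⟩
      intro u huY
      obtain ⟨w, hw⟩ := Option.isSome_iff_exists.mp (hdef u huY)
      have hwX : w ∈ X := by
        by_contra hwX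
        have hwY : w ∉ Y := fun h => hwX (hYX h)
        have : w = v := huniq w v ⟨hwY, u, huY, hw⟩ hvZ
        exact hwX (this ▸ hvX)
      exact Option.isSome_iff_exists.mpr
        ⟨w, (restrict_some_iff δ X u x w).mpr ⟨hw, hYX huY, hwX⟩⟩
  · rintro ⟨hne, hent, hs, hexit⟩
    refine ⟨hne, ?_, ?_, ?_⟩
    · intro u v hu hv
      rcases hZtoR u hu with hu' | rfl <;> rcases hZtoR v hv with hv' | rfl
      · exact hent u v hu' hv'
      · exact hs hv.1 u hu'
      · exact (hs hu.1 v hv').symm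
      · rfl
    · intro hsY u hu
      have hσs : σ = s := by
        rcases hσ with ⟨_, h⟩ | ⟨hns, _⟩
        · exact h
        · exact absurd (hYX hsY) hns
      rcases hZtoR u hu with hu' | rfl
      · rw [← hσs]; exact hs (hσs ▸ hsY) u hu'
      · exact hσs
    · rintro x ⟨v, hvexit⟩
      obtain ⟨hvY, u0, hu0Y, hu0⟩ := hvexit
      by_cases hvX : v ∈ X
      · have hvR : IsExit (restrictδ δ X) Y x v :=
          ⟨hvY, u0, hu0Y, (restrict_some_iff δ X u0 x v).mpr ⟨hu0, hYX hu0Y, hvX⟩⟩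
        obtain ⟨huniq, hdef⟩ := hexit x ⟨v, hvR⟩
        have hdef' : ∀ u ∈ Y, ∃ w, δ u x = some w ∧ w ∈ X := by
          intro u huY
          obtain ⟨w, hw⟩ := Option.isSome_iff_exists.mp (hdef u huY)
          rw [restrict_some_iff] at hw
          exact ⟨w, hw.1, hw.2.2⟩
        have key : ∀ c, IsExit δ Y x c → IsExit (restrictδ δ X) Y x c := by
          rintro c ⟨hcY, u, huY, hu⟩
          obtain ⟨w, hw, hwX⟩ := hdef' u huY
          rw [hu] at hw
          obtain rfl : c = w := (Option.some.injEq _ _).mp hw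
          exact ⟨hcY, u, huY, (restrict_some_iff δ X u x c).mpr ⟨hu, hYX huY, hwX⟩⟩
        refine ⟨fun a b ha hb => huniq a b (key a ha) (key b hb), ?_⟩
        intro u huY
        obtain ⟨w, hw, _⟩ := hdef' u huY
        exact Option.isSome_iff_exists.mpr ⟨w, hw⟩
      · have hvXexit : IsExit δ X x v := ⟨hvX, u0, hYX hu0Y, hu0⟩
        obtain ⟨hXuniq, hXdef⟩ := hXexit x ⟨v, hvXexit⟩
        have noin : ∀ c, IsExit δ Y x c → c ∉ X := by
          rintro c ⟨hcY, u, huY, hu⟩ hcX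
          have hcR : IsExit (restrictδ δ X) Y x c :=
            ⟨hcY, u, huY, (restrict_some_iff δ X u x c).mpr ⟨hu, hYX huY, hcX⟩⟩
          obtain ⟨_, hdef⟩ := hexit x ⟨c, hcR⟩
          obtain ⟨w, hw⟩ := Option.isSome_iff_exists.mp (hdef u0 hu0Y)
          rw [restrict_some_iff, hu0] at hw
          obtain rfl : v = w := (Option.some.injEq _ _).mp hw.1
          exact hvX hw.2.2
        refine ⟨?_, fun u huY => hXdef u (hYX huY)⟩
        rintro a b ha hb
        obtain ⟨haY, ua, huaY, hua⟩ := ha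
        obtain ⟨hbY, ub, hubY, hub⟩ := hb
        exact hXuniq a b ⟨noin a ⟨haY, ua, huaY, hua⟩, ua, hYX huaY, hua⟩
          ⟨noin b ⟨hbY, ub, hubY, hub⟩, ub, hYX hubY, hub⟩
end

section
/- Let Z be an accessible FSM, X a thin module of Z, and Y a subset of Q with X ⊆ Y. Write Y/X = (Y \ X) ∪ {[X]} for the image of Y in the contraction Z/X. Then Y is a thin module of Z if and only if Y/X is a thin module of Z/X. -/
open Classical

universe u v

variable {Q : Type u} {E : Type v}

/-- The transition function of the contraction `Z/X`, on the state set
`(Q \ X) ∪ {[X]}`, where the fresh state `[X]` is modelled by `none` and a state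
`u ∉ X` by `some u` (states `some u` with `u ∈ X` are unused and isolated).
Transitions out of `[X]` go to the `x`-exit of `X`, which is unique since `X` is a
module, so (on module arguments) this function realises exactly the contraction
relation. -/
noncomputable def contr1δ (δ : Q → E → Option Q) (X : Set Q) :
    Option Q → E → Option (Option Q)
  | some u, x =>
      if u ∈ X then none
      else (δ u x).map (fun v => if v ∈ X then (none : Option Q) else some v)
  | none, x =>
      if h : ∃ v, v ∉ X ∧ ∃ w ∈ X, δ w x = some v then some (some (Classical.choose h))
      else none

/-- The image `Y/X = (Y \ X) ∪ {[X]}` of a set `Y ⊇ X` in the contraction `Z/X`. -/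
def contrSet (Y X : Set Q) : Set (Option Q) := insert none (Option.some '' (Y \ X))


section StmtFiveHelpers

variable {δ : Q → E → Option Q} {s : Q} {X Y : Set Q}

/-- The projection `Q → (Q \ X) ∪ {[X]}`. -/
noncomputable def pj (X : Set Q) (u : Q) : Option Q := if u ∈ X then none else some u

lemma pj_eq_none {u : Q} : pj X u = none ↔ u ∈ X := by
  unfold pj; split <;> simp_all

lemma pj_eq_some {u v : Q} : pj X u = some v ↔ u ∉ X ∧ u = v := by
  unfold pj; split <;> simp_all

lemma none_mem_contrSet : (none : Option Q) ∈ contrSet Y X := Set.mem_insert _ _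

lemma some_mem_contrSet {v : Q} : some v ∈ contrSet Y X ↔ v ∈ Y ∧ v ∉ X := by
  simp [contrSet, Set.mem_diff]

lemma pj_mem_contrSet (hXY : X ⊆ Y) {u : Q} : pj X u ∈ contrSet Y X ↔ u ∈ Y := by
  by_cases hu : u ∈ X
  · rw [pj, if_pos hu]
    exact ⟨fun _ => hXY hu, fun _ => none_mem_contrSet⟩
  · rw [pj, if_neg hu, some_mem_contrSet]
    exact ⟨fun h => h.1, fun h => ⟨h, hu⟩⟩

lemma step_inX {u : Q} (hu : u ∈ X) (x : E) : contr1δ δ X (some u) x = none := by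
  simp [contr1δ, hu]

lemma step_some_iff {u : Q} (hu : u ∉ X) {x : E} {w' : Option Q} :
    contr1δ δ X (some u) x = some w' ↔ ∃ v, δ u x = some v ∧ pj X v = w' := by
  simp only [contr1δ, if_neg hu, Option.map_eq_some_iff]
  unfold pj
  tauto

lemma step_none_eq {x : E} {w' : Option Q}
    (h : contr1δ δ X none x = some w') : ∃ v, w' = some v ∧ IsExit δ X x v := by
  by_cases hh : ∃ v, v ∉ X ∧ ∃ w ∈ X, δ w x = some v
  · refine ⟨Classical.choose hh, ?_, Classical.choose_spec hh⟩
    have : contr1δ δ X none x = some (some (Classical.choose hh)) := by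
      simp [contr1δ, dif_pos hh]
    rw [this] at h
    exact (Option.some_injective _ h).symm
  · simp [contr1δ, dif_neg hh] at h

lemma step_none_of_exit (hXm : IsFsmModule δ s X) {x : E} {v : Q} (hv : IsExit δ X x v) :
    contr1δ δ X none x = some (some v) := by
  have hex : ∃ w, w ∉ X ∧ ∃ u ∈ X, δ u x = some w := ⟨v, hv.1, hv.2⟩
  have hspec : IsExit δ X x (Classical.choose hex) := Classical.choose_spec hex
  have heq : Classical.choose hex = v := (hXm.2.2.2 x ⟨v, hv⟩).1 _ _ hspec hv
  simp [contr1δ, dif_pos hex, heq]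


lemma transGen_chain {α : Type*} {R : α → α → Prop} (f : ℕ → α)
    (h : ∀ n, Relation.TransGen R (f n) (f (n + 1))) :
    ∀ {i j : ℕ}, i < j → Relation.TransGen R (f i) (f j) := by
  intro i j hij
  induction j with
  | zero => omega
  | succ j ih =>
    rcases Nat.lt_succ_iff_lt_or_eq.mp hij with h' | h'
    · exact (ih h').trans (h j)
    · subst h'; exact h i

lemma cycle_of_total_trans {α : Type*} [Finite α] {R : α → α → Prop} {M : Set α}
    (hne : M.Nonempty) (h : ∀ a ∈ M, ∃ b ∈ M, Relation.TransGen R a b) :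
    ∃ q ∈ M, Relation.TransGen R q q := by
  obtain ⟨a0, ha0⟩ := hne
  have hf : ∀ a : α, ∃ b : α, a ∈ M → (b ∈ M ∧ Relation.TransGen R a b) := by
    intro a
    by_cases ha : a ∈ M
    · obtain ⟨b, hb, ht⟩ := h a ha; exact ⟨b, fun _ => ⟨hb, ht⟩⟩
    · exact ⟨a0, fun hc => absurd hc ha⟩
  choose f hfspec using hf
  have hmem : ∀ n, f^[n] a0 ∈ M := by
    intro n
    induction n with
    | zero => simpa
    | succ n ih => rw [Function.iterate_succ_apply']; exact (hfspec _ ih).1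
  have hstep : ∀ n, Relation.TransGen R (f^[n] a0) (f^[n + 1] a0) := by
    intro n
    rw [Function.iterate_succ_apply']
    exact (hfspec _ (hmem n)).2
  obtain ⟨i, j, hne', heq⟩ := Finite.exists_ne_map_eq_of_infinite (fun n : ℕ => f^[n] a0)
  rcases hne'.lt_or_gt with hij | hij
  · refine ⟨f^[i] a0, hmem i, ?_⟩
    have := transGen_chain _ hstep hij
    rwa [← heq] at this
  · refine ⟨f^[j] a0, hmem j, ?_⟩
    have := transGen_chain _ hstep hij
    rwa [heq] at this

lemma cycle_mono {δ : Q → E → Option Q} {x : E} {M N : Set Q} (hMN : M ⊆ N)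
    (h : HasXCycleIn δ x M) : HasXCycleIn δ x N := by
  obtain ⟨q, hq, ht⟩ := h
  exact ⟨q, hMN hq, Relation.TransGen.mono (r := fun a b => a ∈ M ∧ δ a x = some b) (p := fun a b => a ∈ N ∧ δ a x = some b) (fun a b hab => ⟨hMN hab.1, hab.2⟩) _ _ ht⟩

lemma cycle_of_closed [Finite Q] {δ : Q → E → Option Q} {x : E} {M : Set Q}
    (hne : M.Nonempty) (hcl : ∀ u ∈ M, ∃ v ∈ M, δ u x = some v) :
    HasXCycleIn δ x M := by
  refine cycle_of_total_trans hne fun a ha => ?_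
  obtain ⟨b, hb, he⟩ := hcl a ha
  exact ⟨b, hb, Relation.TransGen.single ⟨ha, he⟩⟩

lemma escape [Finite Q] {δ : Q → E → Option Q} {x : E} {M : Set Q}
    (htot : ∀ u ∈ M, (δ u x).isSome) (hnc : ¬ HasXCycleIn δ x M) {v : Q} (hv : v ∈ M) :
    ∃ u ∈ M, Relation.ReflTransGen (fun a b => a ∈ M ∧ δ a x = some b) v u ∧
      ∃ w, δ u x = some w ∧ w ∉ M := by
  by_contra hcon
  push_neg at hcon
  set M' : Set Q := {u | u ∈ M ∧ Relation.ReflTransGen (fun a b => a ∈ M ∧ δ a x = some b) v u}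
    with hM'
  have hcl : ∀ u ∈ M', ∃ w ∈ M', δ u x = some w := by
    intro u hu
    obtain ⟨w, hw⟩ := Option.isSome_iff_exists.mp (htot u hu.1)
    have hwM : w ∈ M := hcon u hu.1 hu.2 w hw
    exact ⟨w, ⟨hwM, hu.2.tail ⟨hu.1, hw⟩⟩, hw⟩
  have hc := cycle_of_closed ⟨v, show v ∈ M' from ⟨hv, Relation.ReflTransGen.refl⟩⟩ hcl
  exact hnc (cycle_mono (fun u hu => hu.1) hc)


lemma entrance_corr (hXY : X ⊆ Y) {u : Q} (h : IsEntrance δ Y u) :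
    IsEntrance (contr1δ δ X) (contrSet Y X) (pj X u) := by
  obtain ⟨huY, x, v, hvY, he⟩ := h
  have hvX : v ∉ X := fun hc => hvY (hXY hc)
  refine ⟨(pj_mem_contrSet hXY).mpr huY, x, some v, ?_, ?_⟩
  · rw [some_mem_contrSet]; tauto
  · exact (step_some_iff hvX).mpr ⟨u, he, rfl⟩

lemma entrance_corr' (hXY : X ⊆ Y) {u' : Option Q}
    (h : IsEntrance (contr1δ δ X) (contrSet Y X) u') :
    ∃ u, pj X u = u' ∧ IsEntrance δ Y u := by
  obtain ⟨hu', x, v', hv'nm, he⟩ := h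
  match v' with
  | none => exact absurd none_mem_contrSet hv'nm
  | some v =>
    by_cases hvX : v ∈ X
    · rw [step_inX hvX] at he; exact absurd he (by simp)
    · obtain ⟨u, heu, hpu⟩ := (step_some_iff hvX).mp he
      have hvY : v ∉ Y := fun hc => hv'nm (some_mem_contrSet.mpr ⟨hc, hvX⟩)
      have huY : u ∈ Y := (pj_mem_contrSet hXY).mp (hpu ▸ hu')
      exact ⟨u, hpu, huY, x, v, hvY, heu⟩

lemma exit_corr (hXm : IsFsmModule δ s X) (hXY : X ⊆ Y) {x : E} {v : Q}
    (h : IsExit δ Y x v) : IsExit (contr1δ δ X) (contrSet Y X) x (some v) := by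
  obtain ⟨hvY, u, huY, he⟩ := h
  have hvX : v ∉ X := fun hc => hvY (hXY hc)
  refine ⟨fun hc => hvY (some_mem_contrSet.mp hc).1, ?_⟩
  by_cases huX : u ∈ X
  · exact ⟨none, none_mem_contrSet, step_none_of_exit hXm ⟨hvX, u, huX, he⟩⟩
  · exact ⟨some u, some_mem_contrSet.mpr ⟨huY, huX⟩,
      (step_some_iff huX).mpr ⟨v, he, pj_eq_some.mpr ⟨hvX, rfl⟩⟩⟩

lemma exit_corr' (hXY : X ⊆ Y) {x : E} {v' : Option Q}
    (h : IsExit (contr1δ δ X) (contrSet Y X) x v') :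
    ∃ v, v' = some v ∧ IsExit δ Y x v := by
  obtain ⟨hv'nm, u', hu', he⟩ := h
  match u' with
  | some u =>
    have huYX : u ∈ Y ∧ u ∉ X := some_mem_contrSet.mp hu'
    obtain ⟨v, hev, hpv⟩ := (step_some_iff huYX.2).mp he
    by_cases hvX : v ∈ X
    · rw [pj_eq_none.mpr hvX] at hpv
      exact absurd (hpv ▸ none_mem_contrSet) hv'nm
    · rw [pj, if_neg hvX] at hpv
      subst hpv
      have hvY : v ∉ Y := fun hc => hv'nm (some_mem_contrSet.mpr ⟨hc, hvX⟩)
      exact ⟨v, rfl, hvY, u, huYX.1, hev⟩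
  | none =>
    obtain ⟨w, rfl, hwX, u0, hu0, he0⟩ := step_none_eq he
    have hwY : w ∉ Y := fun hc => hv'nm (some_mem_contrSet.mpr ⟨hc, hwX⟩)
    exact ⟨w, rfl, hwY, u0, hXY hu0, he0⟩

lemma X_exit_of_Y_exit [Finite Q] (hXY : X ⊆ Y) (hXne : X.Nonempty)
    (hYthin : IsThinModule δ s Y) {x : E} (hYexit : ∃ v, IsExit δ Y x v) :
    ∃ v, IsExit δ X x v := by
  by_contra hno
  have htot := (hYthin.1.2.2.2 x hYexit).2
  have hcl : ∀ u ∈ X, ∃ v ∈ X, δ u x = some v := by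
    intro u hu
    obtain ⟨w, hw⟩ := Option.isSome_iff_exists.mp (htot u (hXY hu))
    have hwX : w ∈ X := by
      by_contra hwX
      exact hno ⟨w, hwX, u, hu, hw⟩
    exact ⟨w, hwX, hw⟩
  have hc := cycle_mono hXY (cycle_of_closed hXne hcl)
  rcases hYthin.2 x with h | h
  · exact h hYexit
  · exact h hc

lemma lift_step [Finite Q] (hXm : IsFsmModule δ s X) (hXY : X ⊆ Y) {x : E}
    (hYtot : ∀ u ∈ Y, (δ u x).isSome) (hnc : ¬ HasXCycleIn δ x Y)
    {a' b' : Option Q} (hab : contr1δ δ X a' x = some b')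
    {a : Q} (hpa : pj X a = a') (haY : a ∈ Y) :
    ∃ b, pj X b = b' ∧ Relation.TransGen (fun c d => c ∈ Y ∧ δ c x = some d) a b := by
  match a' with
  | some u =>
    obtain ⟨haX, rfl⟩ := pj_eq_some.mp hpa
    obtain ⟨v, hev, hpv⟩ := (step_some_iff haX).mp hab
    exact ⟨v, hpv, Relation.TransGen.single ⟨haY, hev⟩⟩
  | none =>
    have haX : a ∈ X := pj_eq_none.mp hpa
    obtain ⟨w, rfl, hwexit⟩ := step_none_eq hab
    have hncX : ¬ HasXCycleIn δ x X := fun hc => hnc (cycle_mono hXY hc)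
    obtain ⟨u, huX, hrtg, w0, hew0, hw0X⟩ :=
      escape (fun u hu => hYtot u (hXY hu)) hncX haX
    have hw0exit : IsExit δ X x w0 := ⟨hw0X, u, huX, hew0⟩
    have hw0w : w0 = w := (hXm.2.2.2 x ⟨w, hwexit⟩).1 _ _ hw0exit hwexit
    refine ⟨w, pj_eq_some.mpr ⟨hwexit.1, rfl⟩, ?_⟩
    refine Relation.TransGen.tail' (Relation.ReflTransGen.mono (r := fun c d => c ∈ X ∧ δ c x = some d) (p := fun c d => c ∈ Y ∧ δ c x = some d) (fun c d hcd => ⟨hXY hcd.1, hcd.2⟩) _ _ hrtg) ?_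
    exact ⟨hXY huX, hw0w ▸ hew0⟩

lemma lift_path [Finite Q] (hXm : IsFsmModule δ s X) (hXY : X ⊆ Y) {x : E}
    (hYtot : ∀ u ∈ Y, (δ u x).isSome) (hnc : ¬ HasXCycleIn δ x Y)
    {a' b' : Option Q}
    (h : Relation.TransGen
      (fun c' d' => c' ∈ contrSet Y X ∧ contr1δ δ X c' x = some d') a' b')
    {a : Q} (hpa : pj X a = a') (haY : a ∈ Y) :
    ∃ b, pj X b = b' ∧ Relation.TransGen (fun c d => c ∈ Y ∧ δ c x = some d) a b := by
  induction h with
  | single hstep => exact lift_step hXm hXY hYtot hnc hstep.2 hpa haY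
  | tail ht hstep ih =>
    obtain ⟨b0, hpb0, htg⟩ := ih
    have hb0Y : b0 ∈ Y := (pj_mem_contrSet hXY).mp (hpb0 ▸ hstep.1)
    obtain ⟨b, hpb, htg2⟩ := lift_step hXm hXY hYtot hnc hstep.2 hpb0 hb0Y
    exact ⟨b, hpb, htg.trans htg2⟩

lemma forward_nocycle [Finite Q] (hXm : IsFsmModule δ s X) (hXY : X ⊆ Y) {x : E}
    (hYtot : ∀ u ∈ Y, (δ u x).isSome) (hnc : ¬ HasXCycleIn δ x Y) :
    ¬ HasXCycleIn (contr1δ δ X) x (contrSet Y X) := by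
  rintro ⟨q', hq', hcyc⟩
  match q' with
  | some u =>
    have hu : u ∈ Y ∧ u ∉ X := some_mem_contrSet.mp hq'
    obtain ⟨b, hpb, htg⟩ := lift_path hXm hXY hYtot hnc hcyc
      (pj_eq_some.mpr ⟨hu.2, rfl⟩) hu.1
    obtain ⟨_, rfl⟩ := pj_eq_some.mp hpb
    exact hnc ⟨b, hu.1, htg⟩
  | none =>
    have hstepX : ∀ a ∈ X, ∃ b ∈ X,
        Relation.TransGen (fun c d => c ∈ Y ∧ δ c x = some d) a b := by
      intro a haX
      obtain ⟨b, hpb, htg⟩ := lift_path hXm hXY hYtot hnc hcyc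
        (pj_eq_none.mpr haX) (hXY haX)
      exact ⟨b, pj_eq_none.mp hpb, htg⟩
    obtain ⟨q, hqX, hcq⟩ := cycle_of_total_trans hXm.1 hstepX
    exact hnc ⟨q, hXY hqX, hcq⟩

lemma rx_last {x : E} {a b : Q}
    (h : Relation.TransGen (fun c d => c ∈ X ∧ δ c x = some d ∧ d ∈ X) a b) : b ∈ X := by
  induction h with
  | single hs => exact hs.2.2
  | tail _ hs _ => exact hs.2.2

lemma project_path (hXm : IsFsmModule δ s X) (hXY : X ⊆ Y) {x : E}
    {a b : Q} (h : Relation.TransGen (fun c d => c ∈ Y ∧ δ c x = some d) a b) :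
    Relation.TransGen
      (fun c' d' => c' ∈ contrSet Y X ∧ contr1δ δ X c' x = some d') (pj X a) (pj X b)
    ∨ Relation.TransGen (fun c d => c ∈ X ∧ δ c x = some d ∧ d ∈ X) a b := by
  have step : ∀ {c d : Q}, c ∈ Y → δ c x = some d →
      (c ∈ X ∧ d ∈ X) ∨ (contrSet Y X).Mem (pj X c) ∧ contr1δ δ X (pj X c) x = some (pj X d) := by
    intro c d hcY he
    by_cases hcX : c ∈ X
    · by_cases hdX : d ∈ X
      · exact Or.inl ⟨hcX, hdX⟩
      · refine Or.inr ⟨(pj_eq_none.mpr hcX) ▸ none_mem_contrSet, ?_⟩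
        rw [pj_eq_none.mpr hcX, pj, if_neg hdX]
        exact step_none_of_exit hXm ⟨hdX, c, hcX, he⟩
    · refine Or.inr ⟨(pj_mem_contrSet hXY).mpr hcY, ?_⟩
      rw [pj, if_neg hcX]
      exact (step_some_iff hcX).mpr ⟨d, he, rfl⟩
  induction h with
  | single hs =>
    rcases step hs.1 hs.2 with h1 | h1
    · exact Or.inr (Relation.TransGen.single ⟨h1.1, hs.2, h1.2⟩)
    · exact Or.inl (Relation.TransGen.single h1)
  | @tail c d ht hs ih =>
    rcases step hs.1 hs.2 with h1 | h1
    · rcases ih with h2 | h2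
      · rw [pj_eq_none.mpr h1.1] at h2
        rw [pj_eq_none.mpr h1.2]
        exact Or.inl h2
      · exact Or.inr (h2.tail ⟨h1.1, hs.2, h1.2⟩)
    · rcases ih with h2 | h2
      · exact Or.inl (h2.tail h1)
      · have hcX : c ∈ X := rx_last h2
        have haX : a ∈ X := by
          obtain ⟨a1, ha1, _⟩ := (Relation.TransGen.head'_iff).mp h2
          exact ha1.1
        rw [pj_eq_none.mpr haX]
        rw [pj_eq_none.mpr hcX] at h1
        exact Or.inl (Relation.TransGen.single h1)

lemma backward_nocycle (hXthin : IsThinModule δ s X) (hXY : X ⊆ Y) {x : E}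
    (hXexit : ∃ v, IsExit δ X x v)
    (hnc' : ¬ HasXCycleIn (contr1δ δ X) x (contrSet Y X)) :
    ¬ HasXCycleIn δ x Y := by
  rintro ⟨q, hq, hcyc⟩
  rcases project_path hXthin.1 hXY hcyc with h | h
  · exact hnc' ⟨pj X q, (pj_mem_contrSet hXY).mpr hq, h⟩
  · have hqX : q ∈ X := rx_last h
    have hcX : HasXCycleIn δ x X :=
      ⟨q, hqX, Relation.TransGen.mono (r := fun c d => c ∈ X ∧ δ c x = some d ∧ d ∈ X) (p := fun a b => a ∈ X ∧ δ a x = some b) (fun a b hab => ⟨hab.1, hab.2.1⟩) _ _ h⟩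
    rcases hXthin.2 x with h' | h'
    · exact h' hXexit
    · exact h' hcX

end StmtFiveHelpers

/-- Let `Z` be an accessible FSM, `X` a thin module of `Z` and
`Y ⊇ X`. Then `Y` is a thin module of `Z` iff `Y/X` is a thin module of `Z/X`
(whose start state is `s` if `s ∉ X`, and `[X]` otherwise). -/
theorem stmt5 [Fintype Q] (δ : Q → E → Option Q) (s : Q) (hacc : Accessible δ s)
    (X : Set Q) (hX : IsThinModule δ s X) (Y : Set Q) (hXY : X ⊆ Y) :
    IsThinModule δ s Y ↔
      IsThinModule (contr1δ δ X) (if s ∈ X then none else some s) (contrSet Y X) := by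
  have hXm : IsFsmModule δ s X := hX.1
  have hXne : X.Nonempty := hXm.1
  have hs' : (if s ∈ X then none else some s) = pj X s := rfl
  rw [hs']
  have entrX : ∀ {u : Q}, IsEntrance δ Y u → u ∈ X → IsEntrance δ X u := by
    rintro u ⟨_, x1, w, hwY, he⟩ huX
    exact ⟨huX, x1, w, fun hc => hwY (hXY hc), he⟩
  constructor
  · rintro ⟨hYm, hYthin⟩
    constructor
    · refine ⟨⟨none, none_mem_contrSet⟩, ?_, ?_, ?_⟩
      · intro u' v' hu' hv'
        obtain ⟨u, hpu, hu⟩ := entrance_corr' hXY hu'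
        obtain ⟨v, hpv, hv⟩ := entrance_corr' hXY hv'
        rw [← hpu, ← hpv, hYm.2.1 u v hu hv]
      · intro hs u' hu'
        obtain ⟨u, hpu, hu⟩ := entrance_corr' hXY hu'
        have hsY : s ∈ Y := (pj_mem_contrSet hXY).mp hs
        rw [← hpu, hYm.2.2.1 hsY u hu]
      · intro x hex'
        obtain ⟨v', hv'⟩ := hex'
        obtain ⟨v, rfl, hv⟩ := exit_corr' hXY hv'
        have hYx := hYm.2.2.2 x ⟨v, hv⟩
        constructor
        · intro a' b' ha' hb'
          obtain ⟨a, rfl, ha⟩ := exit_corr' hXY ha'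
          obtain ⟨b, rfl, hb⟩ := exit_corr' hXY hb'
          rw [hYx.1 a b ha hb]
        · intro u' hu'
          match u' with
          | none =>
            obtain ⟨w, hw⟩ :=
              X_exit_of_Y_exit hXY hXne ⟨hYm, hYthin⟩ ⟨v, hv⟩
            rw [step_none_of_exit hXm hw]
            rfl
          | some u =>
            have huYX : u ∈ Y ∧ u ∉ X := some_mem_contrSet.mp hu'
            obtain ⟨w, hw⟩ := Option.isSome_iff_exists.mp (hYx.2 u huYX.1)
            simp [contr1δ, huYX.2, hw]
    · intro x
      by_cases hex' : ∃ v', IsExit (contr1δ δ X) (contrSet Y X) x v'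
      · right
        obtain ⟨v', hv'⟩ := hex'
        obtain ⟨v, rfl, hv⟩ := exit_corr' hXY hv'
        have hnc : ¬ HasXCycleIn δ x Y := (hYthin x).resolve_left (not_not_intro ⟨v, hv⟩)
        exact forward_nocycle hXm hXY (hYm.2.2.2 x ⟨v, hv⟩).2 hnc
      · exact Or.inl hex'
  · rintro ⟨hY'm, hY'thin⟩
    have hXexit_of : ∀ x : E, (∃ v', IsExit (contr1δ δ X) (contrSet Y X) x v') →
        ∃ w, IsExit δ X x w := by
      intro x hex'
      have h1 := (hY'm.2.2.2 x hex').2 none none_mem_contrSet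
      obtain ⟨w', hw'⟩ := Option.isSome_iff_exists.mp h1
      obtain ⟨w, _, hw⟩ := step_none_eq hw'
      exact ⟨w, hw⟩
    constructor
    · refine ⟨hXne.mono hXY, ?_, ?_, ?_⟩
      · intro u v hu hv
        have h' := hY'm.2.1 _ _ (entrance_corr hXY hu) (entrance_corr hXY hv)
        by_cases huX : u ∈ X <;> by_cases hvX : v ∈ X
        · exact hXm.2.1 u v (entrX hu huX) (entrX hv hvX)
        · rw [pj_eq_none.mpr huX] at h'
          exact absurd (pj_eq_none.mp h'.symm) hvX
        · rw [pj_eq_none.mpr hvX] at h'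
          exact absurd (pj_eq_none.mp h') huX
        · rw [pj, if_neg huX, pj, if_neg hvX] at h'
          exact Option.some_injective _ h'
      · intro hsY u hu
        have h' := hY'm.2.2.1 ((pj_mem_contrSet hXY).mpr hsY) _ (entrance_corr hXY hu)
        by_cases hsX : s ∈ X
        · rw [pj_eq_none.mpr hsX] at h'
          have huX : u ∈ X := pj_eq_none.mp h'
          exact hXm.2.2.1 hsX u (entrX hu huX)
        · rw [show pj X s = some s from if_neg hsX] at h'
          exact (pj_eq_some.mp h').2
      · intro x hex
        obtain ⟨v, hv⟩ := hex
        have hY'x := hY'm.2.2.2 x ⟨some v, exit_corr hXm hXY hv⟩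
        constructor
        · intro a b ha hb
          have := hY'x.1 _ _ (exit_corr hXm hXY ha) (exit_corr hXm hXY hb)
          exact Option.some_injective _ this
        · intro u huY
          by_cases huX : u ∈ X
          · obtain ⟨w, hw⟩ := hXexit_of x ⟨some v, exit_corr hXm hXY hv⟩
            exact (hXm.2.2.2 x ⟨w, hw⟩).2 u huX
          · have h1 := hY'x.2 (some u) (some_mem_contrSet.mpr ⟨huY, huX⟩)
            rcases hq : δ u x with _ | w
            · simp [contr1δ, huX, hq] at h1
            · rfl
    · intro x
      by_cases hex : ∃ v, IsExit δ Y x v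
      · right
        obtain ⟨v, hv⟩ := hex
        have hex' : ∃ v', IsExit (contr1δ δ X) (contrSet Y X) x v' :=
          ⟨some v, exit_corr hXm hXY hv⟩
        have hnc' : ¬ HasXCycleIn (contr1δ δ X) x (contrSet Y X) :=
          (hY'thin x).resolve_left (not_not_intro hex')
        exact backward_nocycle hX hXY (hXexit_of x hex') hnc'
      · exact Or.inl hex
end

section
/- Let Z be an accessible FSM and M a module of Z with start node σ. Then every node of M is reachable from σ by a directed path in Z. -/
open Classical

universe u v

variable {Q : Type u} {E : Type v}

/-- In an accessible FSM, every node of a module `M` is reachable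
by a directed path from the start node `σ` of `M`. -/
theorem stmt7 [Fintype Q] (δ : Q → E → Option Q) (s : Q) (hacc : Accessible δ s)
    (M : Set Q) (hM : IsFsmModule δ s M) (σ : Q) (hσ : IsStartNode δ s M σ) :
    ∀ m ∈ M, Reaches δ σ m := by
  intro m hm
  have key : ∀ q, Reaches δ s q → q ∈ M → Reaches δ σ q := by
    intro q hq
    induction hq with
    | refl =>
      intro hs
      rcases hσ with ⟨hsM, rfl⟩ | ⟨hsM, _⟩
      · exact Relation.ReflTransGen.refl
      · exact absurd hs hsM
    | @tail b c hb hstep ih =>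
      intro hc
      by_cases hbM : b ∈ M
      · exact Relation.ReflTransGen.tail (ih hbM) hstep
      · obtain ⟨x, hx⟩ := hstep
        have hent : IsEntrance δ M c := ⟨hc, x, b, hbM, hx⟩
        rcases hσ with ⟨hsM, rfl⟩ | ⟨hsM, hσent⟩
        · rw [hM.2.2.1 hsM c hent]
          exact Relation.ReflTransGen.refl
        · rw [hM.2.1 σ c hσent hent]
          exact Relation.ReflTransGen.refl
  exact key m (hacc m) hm
end

section
/- Let Z be an FSM, M a thin module of Z, and v an x-exit of M for some x ∈ Σ. Then for every node q ∈ M there is an x-path in Z from q to v all of whose nodes other than v belong to M. -/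
open Classical

universe u v

variable {Q : Type u} {E : Type v}

/-- Let `M` be a thin module of an FSM `Z` and `v` an `x`-exit of
`M`. Then from every `q ∈ M` there is an `x`-path to `v` all of whose nodes other
than `v` belong to `M` (formalised: `v` is reachable from `q` by `x`-arcs whose
sources all lie in `M`). -/
theorem stmt8 [Fintype Q] (δ : Q → E → Option Q) (s : Q)
    (M : Set Q) (hM : IsThinModule δ s M) (x : E) (v : Q) (hv : IsExit δ M x v) :
    ∀ q ∈ M, Relation.ReflTransGen (fun a b => a ∈ M ∧ δ a x = some b) q v := by
  obtain ⟨hmod, hthin⟩ := hM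
  have hex : ∃ w, IsExit δ M x w := ⟨v, hv⟩
  obtain ⟨huniq, hdef⟩ := hmod.2.2.2 x hex
  have hnocyc : ¬ HasXCycleIn δ x M := (hthin x).resolve_left (by simpa using hex)
  set step := fun a b => a ∈ M ∧ δ a x = some b with hstep
  set r := fun a b => Relation.TransGen step b a with hr
  have htrans : Transitive r := fun a b c hab hbc => hbc.trans hab
  have hirr : ∀ a, ¬ r a a := by
    intro a ha
    rcases (Relation.transGen_iff step a a).1 ha with ⟨hmem, _⟩ | ⟨b, hb, _⟩
    · exact hnocyc ⟨a, hmem, ha⟩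
    · exact hnocyc ⟨a, (Relation.TransGen.head_induction_on hb
        (fun h => h.1) (fun h _ _ => h.1)), ha⟩
  haveI : IsTrans Q r := ⟨fun a b c hab hbc => htrans hab hbc⟩
  haveI : IsIrrefl Q r := ⟨hirr⟩
  have hwf : WellFounded r := Finite.wellFounded_of_trans_of_irrefl r
  intro q hq
  induction q using hwf.induction with
  | _ q ih =>
    have hsome : (δ q x).isSome := hdef q hq
    obtain ⟨q', hq'⟩ := Option.isSome_iff_exists.1 hsome
    by_cases hmem : q' ∈ M
    · exact Relation.ReflTransGen.head ⟨hq, hq'⟩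
        (ih q' (Relation.TransGen.single ⟨hq, hq'⟩) hmem)
    · have : q' = v := huniq q' v ⟨hmem, q, hq, hq'⟩ hv
      subst this
      exact Relation.ReflTransGen.single ⟨hq, hq'⟩
end

section
/- Let Z be an accessible FSM and let A_1, …, A_n (n ≥ 1) be thin modules of Z forming an overlapping collection, with H = A_1 ∪ … ∪ A_n. Then H is a thin module of Z, there is exactly one node α ∈ H such that α is the start node of every A_i that contains α, and this node α is the start node of H. -/
open Classical

universe u v

variable {Q : Type u} {E : Type v}

namespace Stmt9Aux

/-- One `x`-step whose source lies inside `P`. -/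
abbrev StepX (δ : Q → E → Option Q) (x : E) (P : Set Q) (a b : Q) : Prop :=
  a ∈ P ∧ δ a x = some b

/-- One FSM step with both ends in `M`. -/
abbrev StepIn (δ : Q → E → Option Q) (M : Set Q) (a b : Q) : Prop :=
  a ∈ M ∧ b ∈ M ∧ ∃ x, δ a x = some b

variable {δ : Q → E → Option Q} {s : Q} {M X Y : Set Q} {σ σ' σX σY : Q}

theorem sn_mem (h : IsStartNode δ s M σ) : σ ∈ M := by
  rcases h with ⟨hs, rfl⟩ | ⟨_, hent⟩
  · exact hs
  · exact hent.1

theorem sn_eq_s (h : IsStartNode δ s M σ) (hsM : s ∈ M) : σ = s := by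
  rcases h with ⟨_, rfl⟩ | ⟨hs, _⟩
  · rfl
  · exact absurd hsM hs

theorem ent_eq_sn (hM : IsFsmModule δ s M) (hσ : IsStartNode δ s M σ) {u : Q}
    (hu : IsEntrance δ M u) : u = σ := by
  rcases hσ with ⟨hsM, rfl⟩ | ⟨hsM, hent⟩
  · exact hM.2.2.1 hsM u hu
  · exact hM.2.1 u σ hu hent

theorem reaches_entrance {a b : Q} (h : Reaches δ a b) (ha : a ∉ M) (hb : b ∈ M) :
    ∃ u, IsEntrance δ M u := by
  revert ha
  induction h using Relation.ReflTransGen.head_induction_on with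
  | refl => exact fun hb' => absurd hb hb'
  | head hstep htail ih =>
      rename_i p q
      intro hp
      by_cases hq : q ∈ M
      · obtain ⟨x, hx⟩ := hstep
        exact ⟨q, hq, x, p, hp, hx⟩
      · exact ih hq

theorem sn_exists (hM : IsFsmModule δ s M) (hacc : Accessible δ s) :
    ∃ σ, IsStartNode δ s M σ := by
  by_cases hs : s ∈ M
  · exact ⟨s, Or.inl ⟨hs, rfl⟩⟩
  · obtain ⟨m, hm⟩ := hM.1
    obtain ⟨u, hu⟩ := reaches_entrance (hacc m) hs hm
    exact ⟨u, Or.inr ⟨hs, hu⟩⟩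

theorem sn_unique (hM : IsFsmModule δ s M) (h1 : IsStartNode δ s M σ)
    (h2 : IsStartNode δ s M σ') : σ = σ' := by
  rcases h1 with ⟨hs, rfl⟩ | ⟨hs, he⟩ <;> rcases h2 with ⟨hs', rfl⟩ | ⟨hs', he'⟩
  · rfl
  · exact absurd hs hs'
  · exact absurd hs' hs
  · exact hM.2.1 σ σ' he he'

theorem reachesIn (hM : IsFsmModule δ s M) (hacc : Accessible δ s)
    (hσ : IsStartNode δ s M σ) {u : Q} (hu : u ∈ M) :
    Relation.ReflTransGen (StepIn δ M) σ u := by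
  have key : ∀ w, Reaches δ s w → w ∈ M → Relation.ReflTransGen (StepIn δ M) σ w := by
    intro w h
    induction h with
    | refl =>
        intro hs
        rw [sn_eq_s hσ hs]
    | tail hab hbc ih =>
        rename_i b c
        intro hc
        by_cases hb : b ∈ M
        · exact (ih hb).tail ⟨hb, hc, hbc⟩
        · obtain ⟨x, hx⟩ := hbc
          have hent : IsEntrance δ M c := ⟨hc, x, b, hb, hx⟩
          rw [ent_eq_sn hM hσ hent]
  exact key u (hacc u) hu

theorem lemK (hX : IsFsmModule δ s X) (hY : IsFsmModule δ s Y) (hacc : Accessible δ s)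
    (hσX : IsStartNode δ s X σX) (hσY : IsStartNode δ s Y σY)
    (hne : (X ∩ Y).Nonempty) : σX ∈ Y ∨ σY ∈ X := by
  obtain ⟨c, hcX, hcY⟩ := hne
  have h := reachesIn hX hacc hσX hcX
  have key : ∀ u, Relation.ReflTransGen (StepIn δ X) σX u → u ∈ Y → σX ∈ Y ∨ σY ∈ X := by
    intro u h
    induction h with
    | refl => exact fun h => Or.inl h
    | tail hab hbc ih =>
        rename_i b c'
        intro hc'
        by_cases hb : b ∈ Y
        · exact ih hb
        · obtain ⟨hbX, hcX', x, hx⟩ := hbc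
          have hent : IsEntrance δ Y c' := ⟨hc', x, b, hb, hx⟩
          have hce := ent_eq_sn hY hσY hent
          exact Or.inr (by rwa [hce] at hcX')
  exact key c h hcY

theorem crux (hX : IsFsmModule δ s X) (hY : IsFsmModule δ s Y) (hacc : Accessible δ s)
    (hσX : IsStartNode δ s X σX) (hσY : IsStartNode δ s Y σY)
    (h1 : σX ∈ Y) (h2 : σY ∈ X) : σX = σY := by
  by_cases hsX : s ∈ X
  · have e1 := sn_eq_s hσX hsX
    have hsY : s ∈ Y := by rwa [e1] at h1
    rw [e1, sn_eq_s hσY hsY]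
  · by_cases hsY : s ∈ Y
    · have e2 := sn_eq_s hσY hsY
      have hsX' : s ∈ X := by rwa [e2] at h2
      exact absurd hsX' hsX
    · have hsM : s ∉ X ∪ Y := by
        rintro (h | h)
        · exact hsX h
        · exact hsY h
      obtain ⟨e, heM, x, t, htM, hδ⟩ :=
        reaches_entrance (hacc σX) hsM (Or.inl (sn_mem hσX))
      have htX : t ∉ X := fun h => htM (Or.inl h)
      have htY : t ∉ Y := fun h => htM (Or.inr h)
      cases heM with
      | inl heX =>
          have he := ent_eq_sn hX hσX ⟨heX, x, t, htX, hδ⟩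
          have heY : e ∈ Y := by rwa [he]
          have he2 := ent_eq_sn hY hσY ⟨heY, x, t, htY, hδ⟩
          rw [← he, he2]
      | inr heY =>
          have he := ent_eq_sn hY hσY ⟨heY, x, t, htY, hδ⟩
          have heX : e ∈ X := by rwa [he]
          have he2 := ent_eq_sn hX hσX ⟨heX, x, t, htX, hδ⟩
          rw [← he, he2]

theorem drain [Fintype Q] {x : E} {v : Q}
    (hnc : ¬ HasXCycleIn δ x X)
    (huniq : ∀ v w : Q, IsExit δ X x v → IsExit δ X x w → v = w)
    (htot : ∀ u ∈ X, (δ u x).isSome)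
    (hv : IsExit δ X x v) :
    ∀ u ∈ X, Relation.TransGen (StepX δ x X) u v := by
  have hwf : WellFounded (fun a b : Q => Relation.TransGen (StepX δ x X) b a) := by
    letI : IsTrans Q (fun a b : Q => Relation.TransGen (StepX δ x X) b a) :=
      ⟨fun a b c h1 h2 => h2.trans h1⟩
    letI : IsIrrefl Q (fun a b : Q => Relation.TransGen (StepX δ x X) b a) := by
      refine ⟨fun a h => hnc ⟨a, ?_, h⟩⟩
      obtain ⟨b, hb, -⟩ := Relation.TransGen.head'_iff.mp h
      exact hb.1
    exact Finite.wellFounded_of_trans_of_irrefl _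
  intro u
  induction u using WellFounded.induction hwf with
  | _ u ih =>
    intro hu
    obtain ⟨u', hu'⟩ := Option.isSome_iff_exists.mp (htot u hu)
    by_cases h' : u' ∈ X
    · exact (ih u' (Relation.TransGen.single ⟨hu, hu'⟩) h').head ⟨hu, hu'⟩
    · have hh : u' = v := huniq u' v ⟨h', u, hu, hu'⟩ hv
      exact hh ▸ Relation.TransGen.single ⟨hu, hu'⟩

theorem det2 {x : E} {P R : Set Q} {v w : Q}
    (hvP : v ∉ P) (hvR : v ∉ R) (hwP : w ∉ P) (hwR : w ∉ R) {c : Q}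
    (h1 : Relation.TransGen (StepX δ x P) c v)
    (h2 : Relation.TransGen (StepX δ x R) c w) : v = w := by
  revert h2
  induction h1 using Relation.TransGen.head_induction_on with
  | single h =>
      rename_i a
      intro h2
      obtain ⟨b, hb, hbw⟩ := Relation.TransGen.head'_iff.mp h2
      have hbv : b = v := Option.some_inj.mp (hb.2.symm.trans h.2)
      subst hbv
      rcases Relation.ReflTransGen.cases_head hbw with rfl | ⟨d, hd, -⟩
      · rfl
      · exact absurd hd.1 hvR
  | head hstep htail ih =>
      rename_i a b
      intro h2
      obtain ⟨b', hb', hb'w⟩ := Relation.TransGen.head'_iff.mp h2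
      have hbb : b' = b := Option.some_inj.mp (hb'.2.symm.trans hstep.2)
      subst hbb
      rcases Relation.ReflTransGen.cases_head hb'w with rfl | ⟨d, hd, hdw⟩
      · obtain ⟨e, he, -⟩ := Relation.TransGen.head'_iff.mp htail
        exact absurd he.1 hwP
      · exact ih (Relation.TransGen.head' hd hdw)

theorem exit_on_path {x : E} {P Y : Set Q} {c v : Q}
    (h : Relation.TransGen (StepX δ x P) c v) (hc : c ∈ Y) (hv : v ∉ Y) :
    ∃ w, IsExit δ Y x w := by
  revert hc
  induction h using Relation.TransGen.head_induction_on with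
  | single h =>
      rename_i a
      exact fun ha => ⟨v, hv, a, ha, h.2⟩
  | head hstep htail ih =>
      rename_i a b
      intro ha
      by_cases hb : b ∈ Y
      · exact ih hb
      · exact ⟨b, hb, a, ha, hstep.2⟩

theorem loop_mem {x : E} {q : Q}
    (h : Relation.TransGen (StepX δ x M) q q) :
    ∀ w, Relation.ReflTransGen (fun a b => δ a x = some b) q w → w ∈ M := by
  have key : ∀ w, Relation.ReflTransGen (fun a b => δ a x = some b) q w →
      w ∈ M ∧ Relation.TransGen (StepX δ x M) w w := by
    intro w hw
    induction hw with
    | refl =>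
        refine ⟨?_, h⟩
        obtain ⟨b, hb, -⟩ := Relation.TransGen.head'_iff.mp h
        exact hb.1
    | tail hab hbc ih =>
        rename_i b c
        obtain ⟨hbM, hloop⟩ := ih
        obtain ⟨d, hd, hdb⟩ := Relation.TransGen.head'_iff.mp hloop
        have hcd : c = d := Option.some_inj.mp (hbc.symm.trans hd.2)
        subst hcd
        have hcM : c ∈ M := by
          rcases Relation.ReflTransGen.cases_head hdb with rfl | ⟨e, he, -⟩
          · exact hbM
          · exact he.1
        exact ⟨hcM, Relation.TransGen.tail' hdb ⟨hbM, hbc⟩⟩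
  exact fun w hw => (key w hw).1

theorem thin_pack [Fintype Q] (hX : IsThinModule δ s X) {x : E} {v : Q}
    (hv : IsExit δ X x v) :
    (∀ w, IsExit δ X x w → w = v) ∧ (∀ u ∈ X, (δ u x).isSome) ∧
      ∀ u ∈ X, Relation.TransGen (StepX δ x X) u v := by
  have hex : ∃ w, IsExit δ X x w := ⟨v, hv⟩
  have h4 := hX.1.2.2.2 x hex
  have hnc : ¬ HasXCycleIn δ x X := (hX.2 x).resolve_left (not_not_intro hex)
  exact ⟨fun w hw => h4.1 w v hw hv, h4.2, drain hnc h4.1 h4.2 hv⟩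

theorem union_exit_aux [Fintype Q] (hX : IsThinModule δ s X) (hY : IsThinModule δ s Y)
    {c : Q} (hcX : c ∈ X) (hcY : c ∈ Y) {x : E} {v : Q}
    (hv : v ∉ X ∪ Y) {u : Q} (hu : u ∈ X) (hδ : δ u x = some v) :
    (∀ w, IsExit δ (X ∪ Y) x w → w = v) ∧ (∀ u' ∈ X ∪ Y, (δ u' x).isSome) := by
  have hvX : v ∉ X := fun h => hv (Or.inl h)
  have hvY : v ∉ Y := fun h => hv (Or.inr h)
  obtain ⟨huniqX, htotX, hdrX⟩ := thin_pack hX ⟨hvX, u, hu, hδ⟩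
  have hTGc : Relation.TransGen (StepX δ x X) c v := hdrX c hcX
  obtain ⟨w0, hw0⟩ := exit_on_path hTGc hcY hvY
  obtain ⟨huniqY, htotY, hdrY⟩ := thin_pack hY hw0
  refine ⟨?_, fun u' h => h.elim (htotX u') (htotY u')⟩
  rintro w ⟨hwM, u2, hu2, hδ2⟩
  have hwX : w ∉ X := fun h => hwM (Or.inl h)
  have hwY : w ∉ Y := fun h => hwM (Or.inr h)
  cases hu2 with
  | inl h => exact huniqX w ⟨hwX, u2, h, hδ2⟩
  | inr h =>
      have hww0 : w = w0 := huniqY w ⟨hwY, u2, h, hδ2⟩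
      subst hww0
      exact (det2 hvX hvY hwX hw0.1 hTGc (hdrY c hcY)).symm

theorem union_thin_aux [Fintype Q] (hX : IsThinModule δ s X) (hY : IsThinModule δ s Y)
    {c : Q} (hcX : c ∈ X) (hcY : c ∈ Y) {x : E} {v : Q}
    (hv : v ∉ X ∪ Y) {u : Q} (hu : u ∈ X) (hδ : δ u x = some v)
    (hcyc : HasXCycleIn δ x (X ∪ Y)) : False := by
  have hvX : v ∉ X := fun h => hv (Or.inl h)
  have hvY : v ∉ Y := fun h => hv (Or.inr h)
  obtain ⟨huniqX, htotX, hdrX⟩ := thin_pack hX ⟨hvX, u, hu, hδ⟩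
  have hTGc : Relation.TransGen (StepX δ x X) c v := hdrX c hcX
  obtain ⟨w0, hw0⟩ := exit_on_path hTGc hcY hvY
  obtain ⟨huniqY, htotY, hdrY⟩ := thin_pack hY hw0
  obtain ⟨q, hqM, hloop⟩ := hcyc
  have hmem := loop_mem (M := X ∪ Y) (x := x) hloop
  have projX : ∀ {a b : Q}, Relation.TransGen (StepX δ x X) a b →
      Relation.ReflTransGen (fun a b => δ a x = some b) a b :=
    fun h => (Relation.TransGen.mono (p := fun a b => δ a x = some b) (fun _ _ hab => hab.2) _ _ h).to_reflTransGen
  have projY : ∀ {a b : Q}, Relation.TransGen (StepX δ x Y) a b →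
      Relation.ReflTransGen (fun a b => δ a x = some b) a b :=
    fun h => (Relation.TransGen.mono (p := fun a b => δ a x = some b) (fun _ _ hab => hab.2) _ _ h).to_reflTransGen
  cases hqM with
  | inl hqX => exact hv (hmem v (projX (hdrX q hqX)))
  | inr hqY =>
      have h1 := hdrY q hqY
      have hw0M := hmem w0 (projY h1)
      cases hw0M with
      | inr h => exact hw0.1 h
      | inl h => exact hv (hmem v ((projY h1).trans (projX (hdrX w0 h))))

theorem two_lemma [Fintype Q] (hacc : Accessible δ s)
    (hX : IsThinModule δ s X) (hY : IsThinModule δ s Y)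
    (hint : (X ∩ Y).Nonempty) (hYX : ¬ Y ⊆ X) :
    IsThinModule δ s (X ∪ Y) ∧
    ∀ γ : Q, γ ∈ X ∪ Y → (γ ∈ X → IsStartNode δ s X γ) → (γ ∈ Y → IsStartNode δ s Y γ) →
      IsStartNode δ s (X ∪ Y) γ := by
  by_cases hXY : X ⊆ Y
  · rw [Set.union_eq_self_of_subset_left hXY]
    exact ⟨hY, fun γ hγ _ h2 => h2 hγ⟩
  · obtain ⟨c, hcX, hcY⟩ := hint
    obtain ⟨σX, hσX⟩ := sn_exists hX.1 hacc
    obtain ⟨σY, hσY⟩ := sn_exists hY.1 hacc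
    have hK := lemK hX.1 hY.1 hacc hσX hσY ⟨c, hcX, hcY⟩
    have allent : ∀ e, IsEntrance δ (X ∪ Y) e → e = (if σY ∈ X then σX else σY) := by
      rintro e ⟨heM, x, t, htM, hδ⟩
      have htX : t ∉ X := fun h => htM (Or.inl h)
      have htY : t ∉ Y := fun h => htM (Or.inr h)
      have heXc : e ∈ X → e = σX := fun h => ent_eq_sn hX.1 hσX ⟨h, x, t, htX, hδ⟩
      have heYc : e ∈ Y → e = σY := fun h => ent_eq_sn hY.1 hσY ⟨h, x, t, htY, hδ⟩
      split_ifs with hσ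
      · cases heM with
        | inl h => exact heXc h
        | inr h =>
            have he := heYc h
            exact heXc (he.symm ▸ hσ)
      · have hσXY : σX ∈ Y := hK.resolve_right hσ
        cases heM with
        | inr h => exact heYc h
        | inl h =>
            have he := heXc h
            exact heYc (he.symm ▸ hσXY)
    have pt3 : s ∈ X ∪ Y → ∀ e, IsEntrance δ (X ∪ Y) e → e = s := by
      rintro hsM e ⟨heM, x, t, htM, hδ⟩
      have htX : t ∉ X := fun h => htM (Or.inl h)
      have htY : t ∉ Y := fun h => htM (Or.inr h)
      have sideX : e ∈ X → s ∈ X → e = s := fun h hs => hX.1.2.2.1 hs e ⟨h, x, t, htX, hδ⟩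
      have sideY : e ∈ Y → s ∈ Y → e = s := fun h hs => hY.1.2.2.1 hs e ⟨h, x, t, htY, hδ⟩
      cases heM with
      | inl h =>
          cases hsM with
          | inl hs => exact sideX h hs
          | inr hs =>
              by_cases hXinY : σX ∈ Y
              · have h1 : e = σX := ent_eq_sn hX.1 hσX ⟨h, x, t, htX, hδ⟩
                exact sideY (h1.symm ▸ hXinY) hs
              · have hσYX : σY ∈ X := hK.resolve_left hXinY
                have h3 : σY = s := sn_eq_s hσY hs
                exact sideX h (h3 ▸ hσYX)
      | inr h =>
          cases hsM with
          | inr hs => exact sideY h hs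
          | inl hs =>
              by_cases hYinX : σY ∈ X
              · have h1 : e = σY := ent_eq_sn hY.1 hσY ⟨h, x, t, htY, hδ⟩
                exact sideX (h1.symm ▸ hYinX) hs
              · have hσXY : σX ∈ Y := hK.resolve_right hYinX
                have h3 : σX = s := sn_eq_s hσX hs
                exact sideY h (h3 ▸ hσXY)
    have pt4 : ∀ x : E, (∃ v, IsExit δ (X ∪ Y) x v) →
        ((∀ v w : Q, IsExit δ (X ∪ Y) x v → IsExit δ (X ∪ Y) x w → v = w) ∧
          ∀ u ∈ X ∪ Y, (δ u x).isSome) := by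
      rintro x ⟨v, hvM, u, huM, hδ⟩
      cases huM with
      | inl hu =>
          obtain ⟨huniq, htot⟩ := union_exit_aux hX hY hcX hcY hvM hu hδ
          exact ⟨fun v' w' h1 h2 => (huniq v' h1).trans (huniq w' h2).symm, htot⟩
      | inr hu =>
          have hvM' : v ∉ Y ∪ X := by rwa [Set.union_comm Y X]
          have hres := union_exit_aux hY hX hcY hcX hvM' hu hδ
          rw [Set.union_comm Y X] at hres
          exact ⟨fun v' w' h1 h2 => (hres.1 v' h1).trans (hres.1 w' h2).symm, hres.2⟩
    have thin : ∀ x : E, (¬ ∃ v, IsExit δ (X ∪ Y) x v) ∨ ¬ HasXCycleIn δ x (X ∪ Y) := by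
      intro x
      by_cases hex : ∃ v, IsExit δ (X ∪ Y) x v
      · right
        intro hcyc
        obtain ⟨v, hvM, u, huM, hδ⟩ := hex
        cases huM with
        | inl hu => exact union_thin_aux hX hY hcX hcY hvM hu hδ hcyc
        | inr hu =>
            have hvM' : v ∉ Y ∪ X := by rwa [Set.union_comm Y X]
            have hcyc' : HasXCycleIn δ x (Y ∪ X) := by rwa [Set.union_comm X Y] at hcyc
            exact union_thin_aux hY hX hcY hcX hvM' hu hδ hcyc'
      · exact Or.inl hex
    have hmod : IsFsmModule δ s (X ∪ Y) :=
      ⟨⟨c, Or.inl hcX⟩, fun u v hu hv => (allent u hu).trans (allent v hv).symm,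
        fun hs u hu => pt3 hs u hu, pt4⟩
    refine ⟨⟨hmod, thin⟩, ?_⟩
    intro γ hγ hgX hgY
    by_cases hsM : s ∈ X ∪ Y
    · left
      refine ⟨hsM, ?_⟩
      cases hγ with
      | inl h =>
          have h1 : γ = σX := sn_unique hX.1 (hgX h) hσX
          cases hsM with
          | inl hs => rw [h1, sn_eq_s hσX hs]
          | inr hs =>
              by_cases hXinY : σX ∈ Y
              · have hγY : γ ∈ Y := by rw [h1]; exact hXinY
                rw [sn_unique hY.1 (hgY hγY) hσY, sn_eq_s hσY hs]
              · have hσYX : σY ∈ X := hK.resolve_left hXinY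
                have h3 : σY = s := sn_eq_s hσY hs
                rw [h1, sn_eq_s hσX (h3 ▸ hσYX)]
      | inr h =>
          have h1 : γ = σY := sn_unique hY.1 (hgY h) hσY
          cases hsM with
          | inr hs => rw [h1, sn_eq_s hσY hs]
          | inl hs =>
              by_cases hYinX : σY ∈ X
              · have hγX : γ ∈ X := by rw [h1]; exact hYinX
                rw [sn_unique hX.1 (hgX hγX) hσX, sn_eq_s hσX hs]
              · have hσXY : σX ∈ Y := hK.resolve_right hYinX
                have h3 : σX = s := sn_eq_s hσX hs
                rw [h1, sn_eq_s hσY (h3 ▸ hσXY)]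
    · right
      refine ⟨hsM, ?_⟩
      obtain ⟨e, he⟩ := reaches_entrance (hacc c) hsM (Or.inl hcX)
      have hγe : γ = e := by
        rw [allent e he]
        split_ifs with hσ
        · cases hγ with
          | inl h => exact sn_unique hX.1 (hgX h) hσX
          | inr h =>
              have h1 : γ = σY := sn_unique hY.1 (hgY h) hσY
              have hγX : γ ∈ X := by rw [h1]; exact hσ
              exact sn_unique hX.1 (hgX hγX) hσX
        · have hσXY : σX ∈ Y := hK.resolve_right hσ
          cases hγ with
          | inr h => exact sn_unique hY.1 (hgY h) hσY
          | inl h =>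
              have h1 : γ = σX := sn_unique hX.1 (hgX h) hσX
              have hγY : γ ∈ Y := by rw [h1]; exact hσXY
              exact sn_unique hY.1 (hgY hγY) hσY
      rw [hγe]; exact he

theorem grow [Fintype Q] (hacc : Accessible δ s)
    (S : Finset (Set Q)) (hthin : ∀ A ∈ S, IsThinModule δ s A)
    (hov : OverlapColl (↑S : Set (Set Q))) :
    ∀ (k : ℕ) (T : Finset (Set Q)), T ⊆ S → T.Nonempty → (S \ T).card = k →
      (IsThinModule δ s (⋃₀ (↑T : Set (Set Q))) ∧
       ∀ γ, γ ∈ ⋃₀ (↑T : Set (Set Q)) → (∀ C ∈ T, γ ∈ C → IsStartNode δ s C γ) →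
         IsStartNode δ s (⋃₀ (↑T : Set (Set Q))) γ) →
      (IsThinModule δ s (⋃₀ (↑S : Set (Set Q))) ∧
       ∀ γ, γ ∈ ⋃₀ (↑S : Set (Set Q)) → (∀ C ∈ S, γ ∈ C → IsStartNode δ s C γ) →
         IsStartNode δ s (⋃₀ (↑S : Set (Set Q))) γ) := by
  intro k
  induction k with
  | zero =>
      intro T hTS hTne hcard hP
      have hST : S ⊆ T := by
        rw [← Finset.sdiff_eq_empty_iff_subset]
        exact Finset.card_eq_zero.mp hcard
      have : T = S := Finset.Subset.antisymm hTS hST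
      rwa [this] at hP
  | succ k ihk =>
      intro T hTS hTne hcard hP
      have h1 : (↑T : Set (Set Q)) ⊆ ↑S := Finset.coe_subset.mpr hTS
      have h2 : (↑T : Set (Set Q)).Nonempty := Finset.coe_nonempty.mpr hTne
      have h3 : ((↑S : Set (Set Q)) \ ↑T).Nonempty := by
        have hne : (S \ T).Nonempty := Finset.card_pos.mp (by rw [hcard]; exact k.succ_pos)
        obtain ⟨A, hA⟩ := hne
        rw [Finset.mem_sdiff] at hA
        exact ⟨A, hA.1, fun h => hA.2 (Finset.mem_coe.mp h)⟩
      obtain ⟨B, hB, A, hA, hovBA⟩ := hov (↑T) h1 h2 h3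
      have hAS : A ∈ S := Finset.mem_coe.mp hA.1
      have hAT : A ∉ T := fun h => hA.2 (Finset.mem_coe.mpr h)
      have hint : (A ∩ ⋃₀ (↑T : Set (Set Q))).Nonempty := by
        obtain ⟨p, hp⟩ := hovBA.1
        exact ⟨p, hp.2, B, hB, hp.1⟩
      have hnsub : ¬ (⋃₀ (↑T : Set (Set Q))) ⊆ A := by
        intro hsub
        obtain ⟨b, hbB, hbA⟩ := Set.not_subset.mp hovBA.2.1
        exact hbA (hsub ⟨B, hB, hbB⟩)
      obtain ⟨hthinU, hgs⟩ := two_lemma hacc (hthin A hAS) hP.1 hint hnsub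
      have hunion : (⋃₀ (↑(insert A T) : Set (Set Q))) = A ∪ ⋃₀ (↑T : Set (Set Q)) := by
        rw [Finset.coe_insert, Set.sUnion_insert]
      have hPnew : IsThinModule δ s (⋃₀ (↑(insert A T) : Set (Set Q))) ∧
          ∀ γ, γ ∈ ⋃₀ (↑(insert A T) : Set (Set Q)) →
            (∀ C ∈ insert A T, γ ∈ C → IsStartNode δ s C γ) →
            IsStartNode δ s (⋃₀ (↑(insert A T) : Set (Set Q))) γ := by
        constructor
        · rw [hunion]; exact hthinU
        · intro γ hγ hall
          rw [hunion] at hγ ⊢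
          refine hgs γ hγ (fun hγA => hall A (Finset.mem_insert_self A T) hγA) ?_
          intro hγY
          exact hP.2 γ hγY (fun C hC hγC => hall C (Finset.mem_insert_of_mem hC) hγC)
      refine ihk (insert A T) (Finset.insert_subset_iff.mpr ⟨hAS, hTS⟩)
        ⟨A, Finset.mem_insert_self A T⟩ ?_ hPnew
      have hsd : S \ insert A T = (S \ T).erase A := by
        ext C
        simp only [Finset.mem_sdiff, Finset.mem_erase, Finset.mem_insert]
        tauto
      rw [hsd, Finset.card_erase_of_mem (Finset.mem_sdiff.mpr ⟨hAS, hAT⟩), hcard]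
      omega

end Stmt9Aux

/-- Let `Z` be an accessible FSM and `S = {A_1, …, A_n}` (`n ≥ 1`)
an overlapping collection of thin modules of `Z`, with `H = ⋃₀ S`. Then `H` is a
thin module of `Z`, there is exactly one node `α ∈ H` which is the start node of
every member of `S` containing it, and this `α` is the start node of `H`. -/
theorem stmt9 [Fintype Q] (δ : Q → E → Option Q) (s : Q) (hacc : Accessible δ s)
    (S : Finset (Set Q)) (hS : S.Nonempty)
    (hthin : ∀ A ∈ S, IsThinModule δ s A)
    (hov : OverlapColl (↑S : Set (Set Q))) :
    IsThinModule δ s (⋃₀ (↑S : Set (Set Q))) ∧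
    (∃! α : Q, α ∈ ⋃₀ (↑S : Set (Set Q)) ∧ ∀ A ∈ S, α ∈ A → IsStartNode δ s A α) ∧
    (∀ α : Q, (α ∈ ⋃₀ (↑S : Set (Set Q)) ∧ ∀ A ∈ S, α ∈ A → IsStartNode δ s A α) →
      IsStartNode δ s (⋃₀ (↑S : Set (Set Q))) α) := by
  classical
  obtain ⟨A0, hA0⟩ := hS
  have hbase : IsThinModule δ s (⋃₀ (↑({A0} : Finset (Set Q)) : Set (Set Q))) ∧
      ∀ γ, γ ∈ ⋃₀ (↑({A0} : Finset (Set Q)) : Set (Set Q)) →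
        (∀ C ∈ ({A0} : Finset (Set Q)), γ ∈ C → IsStartNode δ s C γ) →
        IsStartNode δ s (⋃₀ (↑({A0} : Finset (Set Q)) : Set (Set Q))) γ := by
    rw [Finset.coe_singleton, Set.sUnion_singleton]
    exact ⟨hthin A0 hA0, fun γ hγ hall => hall A0 (Finset.mem_singleton_self A0) hγ⟩
  obtain ⟨hthinH, hgs⟩ := Stmt9Aux.grow hacc S hthin hov (S \ {A0}).card {A0}
    (Finset.singleton_subset_iff.mpr hA0) (Finset.singleton_nonempty A0) rfl hbase
  refine ⟨hthinH, ?_, fun α hα => hgs α hα.1 hα.2⟩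
  obtain ⟨σ, hσ⟩ := Stmt9Aux.sn_exists hthinH.1 hacc
  have hσprop : σ ∈ ⋃₀ (↑S : Set (Set Q)) ∧ ∀ A ∈ S, σ ∈ A → IsStartNode δ s A σ := by
    refine ⟨Stmt9Aux.sn_mem hσ, ?_⟩
    intro A hA hσA
    rcases hσ with ⟨hsH, rfl⟩ | ⟨hsH, hσH, x, t, htH, hδ⟩
    · exact Or.inl ⟨hσA, rfl⟩
    · have hsub : A ⊆ ⋃₀ (↑S : Set (Set Q)) := Set.subset_sUnion_of_mem (Finset.mem_coe.mpr hA)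
      exact Or.inr ⟨fun h => hsH (hsub h), hσA, x, t, fun h => htH (hsub h), hδ⟩
  exact ⟨σ, hσprop, fun γ hγ => Stmt9Aux.sn_unique hthinH.1 (hgs γ hγ.1 hγ.2) hσ⟩
end

section
/- Let X be a finite set and F a family of subsets of X such that whenever A, B ∈ F are overlapping, A ∪ B ∈ F. Then a set M belongs to F if and only if M is the union of an overlapping collection of indecomposable elements of F. -/
lemma not_overlap_cases {α : Type*} {a b : Set α} (h : ¬ Overlap a b)
    (hne : (a ∩ b).Nonempty) : a ⊆ b ∨ b ⊆ a := by
  by_contra hc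
  push_neg at hc
  exact h ⟨hne, hc.1, hc.2⟩

/-- Key sub-lemma: if the unions of two overlapping collections overlap,
then some member of the first overlaps some member of the second. -/
lemma key_sub {α : Type*} {SA SB : Set (Set α)}
    (hA : OverlapColl SA) (hB : OverlapColl SB)
    (h : Overlap (⋃₀ SA) (⋃₀ SB)) :
    ∃ a ∈ SA, ∃ b ∈ SB, Overlap a b := by
  by_contra hcon
  push_neg at hcon
  obtain ⟨hne, hAB, hBA⟩ := h
  -- Step 1: find a ∈ SA meeting ⋃₀ SB but not contained in it.
  have step1 : ∃ a ∈ SA, (a ∩ ⋃₀ SB).Nonempty ∧ ¬ a ⊆ ⋃₀ SB := by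
    by_contra hs
    push_neg at hs
    set T1 := {a ∈ SA | a ⊆ ⋃₀ SB} with hT1def
    have hT1ne : T1.Nonempty := by
      obtain ⟨x, hx1, hx2⟩ := hne
      obtain ⟨a, haSA, hxa⟩ := hx1
      exact ⟨a, haSA, hs a haSA ⟨x, hxa, hx2⟩⟩
    have hdiffne : (SA \ T1).Nonempty := by
      by_contra hd
      apply hAB
      apply Set.sUnion_subset
      intro a haSA
      by_contra h'
      exact hd ⟨a, haSA, fun hmem => h' hmem.2⟩
    obtain ⟨a1, ha1, a2, ha2, hov⟩ := hA T1 (Set.sep_subset _ _) hT1ne hdiffne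
    have : (a2 ∩ ⋃₀ SB).Nonempty := by
      obtain ⟨x, hx1, hx2⟩ := hov.1
      exact ⟨x, hx2, ha1.2 hx1⟩
    exact ha2.2 ⟨ha2.1, hs a2 ha2.1 this⟩
  obtain ⟨a, haSA, hameet, hanot⟩ := step1
  -- Step 2
  set T2 := {b ∈ SB | b ⊆ a} with hT2def
  have hT2ne : T2.Nonempty := by
    obtain ⟨x, hxa, hxB⟩ := hameet
    obtain ⟨b, hbSB, hxb⟩ := hxB
    rcases not_overlap_cases (hcon a haSA b hbSB) ⟨x, hxa, hxb⟩ with h' | h'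
    · exact absurd (h'.trans (Set.subset_sUnion_of_mem hbSB)) hanot
    · exact ⟨b, hbSB, h'⟩
  have hT2diff : (SB \ T2).Nonempty := by
    by_contra hd
    apply hBA
    have : ∀ b ∈ SB, b ⊆ a := by
      intro b hb
      by_contra h'
      exact hd ⟨b, hb, fun hmem => h' hmem.2⟩
    exact (Set.sUnion_subset this).trans (Set.subset_sUnion_of_mem haSA)
  obtain ⟨b1, hb1, b2, hb2, hov⟩ := hB T2 (Set.sep_subset _ _) hT2ne hT2diff
  have hmeet : (a ∩ b2).Nonempty := by
    obtain ⟨x, hx1, hx2⟩ := hov.1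
    exact ⟨x, hb1.2 hx1, hx2⟩
  rcases not_overlap_cases (hcon a haSA b2 hb2.1) hmeet with h' | h'
  · exact hanot (h'.trans (Set.subset_sUnion_of_mem hb2.1))
  · exact hb2.2 ⟨hb2.1, h'⟩

/-- Gluing lemma: replacing each member of an overlapping collection by an
overlapping collection with the same union yields an overlapping collection. -/
lemma glue {α : Type*} {S : Set (Set α)} {f : Set α → Set (Set α)}
    (hS : OverlapColl S)
    (hovf : ∀ A ∈ S, OverlapColl (f A))
    (hunf : ∀ A ∈ S, ⋃₀ f A = A) :
    OverlapColl (⋃ A ∈ S, f A) := by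
  intro T hT hTne hdne
  by_cases hsplit : ∃ A ∈ S, (f A ∩ T).Nonempty ∧ (f A \ T).Nonempty
  · obtain ⟨A, hAS, h1, h2⟩ := hsplit
    have h2' : (f A \ (f A ∩ T)).Nonempty := by
      obtain ⟨x, hx1, hx2⟩ := h2
      exact ⟨x, hx1, fun hmem => hx2 hmem.2⟩
    obtain ⟨a, ha, b, hb, hab⟩ := hovf A hAS (f A ∩ T) Set.inter_subset_left h1 h2'
    refine ⟨a, ha.2, b, ⟨Set.mem_biUnion hAS hb.1, fun hbT => hb.2 ⟨hb.1, hbT⟩⟩, hab⟩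
  · push_neg at hsplit
    have hcases : ∀ A ∈ S, f A ∩ T = ∅ ∨ f A ⊆ T := by
      intro A hAS
      rcases Set.eq_empty_or_nonempty (f A ∩ T) with h | h
      · exact Or.inl h
      · right
        intro x hx
        by_contra hxT
        have hd := hsplit A hAS h
        rw [Set.eq_empty_iff_forall_notMem] at hd
        exact hd x ⟨hx, hxT⟩
    set TS := {A ∈ S | f A ⊆ T} with hTSdef
    have hTSne : TS.Nonempty := by
      obtain ⟨t, htT⟩ := hTne
      obtain ⟨A, hAS, htA⟩ : ∃ A ∈ S, t ∈ f A := by simpa using hT htT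
      rcases hcases A hAS with h | h
      · exact absurd h (by rw [Set.eq_empty_iff_forall_notMem]; push_neg; exact ⟨t, htA, htT⟩)
      · exact ⟨A, hAS, h⟩
    have hTSdiff : (S \ TS).Nonempty := by
      obtain ⟨s, hs1, hs2⟩ := hdne
      obtain ⟨B, hBS, hsB⟩ : ∃ B ∈ S, s ∈ f B := by simpa using hs1
      exact ⟨B, hBS, fun hB => hs2 (hB.2 hsB)⟩
    obtain ⟨A, hATS, B, hBd, hABov⟩ := hS TS (Set.sep_subset _ _) hTSne hTSdiff
    have hfBT : f B ∩ T = ∅ := by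
      rcases hcases B hBd.1 with h | h
      · exact h
      · exact absurd ⟨hBd.1, h⟩ hBd.2
    have hABov' : Overlap (⋃₀ f A) (⋃₀ f B) := by
      rwa [hunf A hATS.1, hunf B hBd.1]
    obtain ⟨a, haA, b, hbB, hab⟩ := key_sub (hovf A hATS.1) (hovf B hBd.1) hABov'
    refine ⟨a, hATS.2 haA, b, ⟨Set.mem_biUnion hBd.1 hbB, fun hbT => ?_⟩, hab⟩
    have : b ∈ f B ∩ T := ⟨hbB, hbT⟩
    rw [hfBT] at this
    exact this

/-- Forward direction, by strong induction on the cardinality of `M`. -/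
lemma fwd {α : Type*} [Fintype α] (F : Set (Set α))
    (hcl : ∀ A B, A ∈ F → B ∈ F → Overlap A B → A ∪ B ∈ F) :
    ∀ (n : ℕ) (M : Set α), M.ncard = n → M ∈ F →
      ∃ S : Set (Set α), S.Nonempty ∧ (∀ A ∈ S, Indecomposable F A) ∧
        OverlapColl S ∧ ⋃₀ S = M := by
  intro n
  induction n using Nat.strong_induction_on with
  | _ n ih =>
  intro M hn hM
  by_cases hdec : Decomposable F M
  · obtain ⟨S0, hS0F, hS0ov, hS0un, a0, ha0, b0, hb0, hab⟩ := hdec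
    have hneM : ∀ A ∈ S0, A ≠ M := by
      intro A hA hAM
      subst hAM
      have hc : ∃ c ∈ S0, c ≠ A := by
        rcases eq_or_ne a0 A with h | h
        · exact ⟨b0, hb0, fun hb => hab (h.trans hb.symm)⟩
        · exact ⟨a0, ha0, h⟩
      obtain ⟨c, hcS, hcA⟩ := hc
      obtain ⟨x, hx, y, hy, hxy⟩ := hS0ov (S0 \ {A}) Set.diff_subset ⟨c, hcS, hcA⟩
        ⟨A, hA, fun h => h.2 rfl⟩
      have hyA : y = A := by
        by_contra h
        exact hy.2 ⟨hy.1, h⟩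
      subst hyA
      exact hxy.2.1 (hS0un ▸ Set.subset_sUnion_of_mem hx.1)
    have hstep : ∀ A ∈ S0, ∃ S : Set (Set α), S.Nonempty ∧
        (∀ B ∈ S, Indecomposable F B) ∧ OverlapColl S ∧ ⋃₀ S = A := by
      intro A hA
      have hsub : A ⊆ M := hS0un ▸ Set.subset_sUnion_of_mem hA
      have hlt : A.ncard < n := by
        rw [← hn]
        exact Set.ncard_lt_ncard (ssubset_of_subset_of_ne hsub (hneM A hA)) M.toFinite
      exact ih A.ncard hlt A rfl (hS0F hA)
    choose! f hf1 hf2 hf3 hf4 using hstep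
    refine ⟨⋃ A ∈ S0, f A, ?_, ?_, ?_, ?_⟩
    · obtain ⟨x, hx⟩ := hf1 a0 ha0
      exact ⟨x, Set.mem_biUnion ha0 hx⟩
    · intro B hB
      obtain ⟨A, hAS, hBA⟩ : ∃ A ∈ S0, B ∈ f A := by simpa using hB
      exact hf2 A hAS B hBA
    · exact glue hS0ov hf3 hf4
    · ext x
      simp only [Set.mem_sUnion, Set.mem_iUnion, exists_prop]
      constructor
      · rintro ⟨t, ht, hxt⟩
        obtain ⟨A, hAS, htA⟩ : ∃ A ∈ S0, t ∈ f A := by simpa using ht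
        have : x ∈ ⋃₀ f A := ⟨t, htA, hxt⟩
        rw [hf4 A hAS] at this
        exact (hS0un ▸ Set.subset_sUnion_of_mem hAS) this
      · intro hx
        rw [← hS0un] at hx
        obtain ⟨A, hAS, hxA⟩ := hx
        rw [← hf4 A hAS] at hxA
        obtain ⟨t, htA, hxt⟩ := hxA
        exact ⟨t, ⟨A, hAS, htA⟩, hxt⟩
  · refine ⟨{M}, ⟨M, rfl⟩, ?_, ?_, Set.sUnion_singleton M⟩
    · intro A hA
      rw [Set.mem_singleton_iff] at hA
      subst hA
      exact ⟨hM, hdec⟩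
    · intro T hT hTne hdne
      exfalso
      obtain ⟨t, ht⟩ := hTne
      obtain ⟨s, hs1, hs2⟩ := hdne
      have hteq : t = M := hT ht
      have hseq : s = M := hs1
      exact hs2 (by rw [hseq, ← hteq]; exact ht)

/-- Backward direction, by strong induction on the cardinality of `S`. -/
lemma bwd {α : Type*} [Fintype α] (F : Set (Set α))
    (hcl : ∀ A B, A ∈ F → B ∈ F → Overlap A B → A ∪ B ∈ F) :
    ∀ (n : ℕ) (S : Set (Set α)), S.ncard = n → S.Nonempty → S ⊆ F →
      OverlapColl S → ⋃₀ S ∈ F := by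
  intro n
  induction n using Nat.strong_induction_on with
  | _ n ih =>
  intro S hn hne hSF hov
  obtain ⟨A, hAS, hAmax⟩ := Set.Finite.exists_maximalFor id S S.toFinite hne
  simp only [id] at hAmax
  replace hAmax : ∀ B ∈ S, A ⊆ B → A = B := fun B hB h => le_antisymm h (hAmax hB h)
  by_cases hall : ∀ B ∈ S, B ⊆ A
  · have : ⋃₀ S = A :=
      subset_antisymm (Set.sUnion_subset hall) (Set.subset_sUnion_of_mem hAS)
    rw [this]; exact hSF hAS
  · push_neg at hall
    have hTdiff : (S \ {B ∈ S | B ⊆ A}).Nonempty := by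
      obtain ⟨B, hB1, hB2⟩ := hall
      exact ⟨B, hB1, fun h => hB2 h.2⟩
    obtain ⟨C, hCT, D, hDd, hCD⟩ :=
      hov {B ∈ S | B ⊆ A} (Set.sep_subset _ _) ⟨A, hAS, subset_rfl⟩ hTdiff
    have hDS : D ∈ S := hDd.1
    have hDA : ¬ D ⊆ A := fun h => hDd.2 ⟨hDS, h⟩
    have hAD : Overlap A D := by
      refine ⟨?_, ?_, hDA⟩
      · obtain ⟨x, hx1, hx2⟩ := hCD.1
        exact ⟨x, hCT.2 hx1, hx2⟩
      · intro h
        exact hDA (subset_of_eq (hAmax D hDS h).symm)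
    set E := A ∪ D with hEdef
    have hEF : E ∈ F := hcl A D (hSF hAS) (hSF hDS) hAD
    have hAE : A ⊆ E := Set.subset_union_left
    have hDE : D ⊆ E := Set.subset_union_right
    have hEnb : ∀ B ∈ S, ¬ E ⊆ B := by
      intro B hBS hEB
      have hABeq : A = B := hAmax B hBS (hAE.trans hEB)
      exact hDA (hDE.trans (hEB.trans (subset_of_eq hABeq.symm)))
    set S' := insert E {B ∈ S | ¬ B ⊆ E} with hS'def
    have hS'F : S' ⊆ F := by
      rintro B hB
      rcases hB with rfl | ⟨h1, _⟩
      · exact hEF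
      · exact hSF h1
    -- cardinality drops
    have hADne : A ≠ D := fun h => hDA (subset_of_eq h.symm)
    have hsub2 : {B ∈ S | ¬ B ⊆ E} ⊆ S \ {A, D} := by
      rintro B ⟨hBS, hBE⟩
      refine ⟨hBS, ?_⟩
      rintro (rfl | rfl)
      · exact hBE hAE
      · exact hBE hDE
    have hpairsub : ({A, D} : Set (Set α)) ⊆ S := by
      rintro x (rfl | rfl) <;> assumption
    have h2S : ({A, D} : Set (Set α)).ncard = 2 := Set.ncard_pair hADne
    have h2le : 2 ≤ S.ncard := h2S ▸ Set.ncard_le_ncard hpairsub S.toFinite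
    have hcard : S'.ncard < n := by
      have h1 : S'.ncard ≤ {B ∈ S | ¬ B ⊆ E}.ncard + 1 := Set.ncard_insert_le _ _
      have h2 : {B ∈ S | ¬ B ⊆ E}.ncard ≤ (S \ {A, D}).ncard :=
        Set.ncard_le_ncard hsub2 S.toFinite.diff
      have h3 : (S \ {A, D}).ncard = S.ncard - 2 := by
        rw [Set.ncard_diff hpairsub, h2S]
      omega
    -- same union
    have hunion : ⋃₀ S' = ⋃₀ S := by
      apply subset_antisymm
      · apply Set.sUnion_subset
        rintro B hB
        rcases hB with rfl | ⟨h1, _⟩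
        · exact Set.union_subset (Set.subset_sUnion_of_mem hAS) (Set.subset_sUnion_of_mem hDS)
        · exact Set.subset_sUnion_of_mem h1
      · apply Set.sUnion_subset
        intro B hBS
        by_cases hBE : B ⊆ E
        · exact hBE.trans (Set.subset_sUnion_of_mem (Set.mem_insert _ _))
        · exact Set.subset_sUnion_of_mem (Set.mem_insert_of_mem _ ⟨hBS, hBE⟩)
    -- still an overlapping collection
    have hov' : OverlapColl S' := by
      intro T' hT' hT'ne hd'
      by_cases hET' : E ∈ T'
      · set T := {B ∈ S | B ⊆ E} ∪ (T' \ {E}) with hTdef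
        have hTsub : T ⊆ S := by
          rintro B (⟨hBS, _⟩ | ⟨hBT', hBE⟩)
          · exact hBS
          · rcases hT' hBT' with rfl | ⟨h1, _⟩
            · exact absurd rfl hBE
            · exact h1
        have hTne : T.Nonempty := ⟨A, Or.inl ⟨hAS, hAE⟩⟩
        have hTd : (S \ T).Nonempty := by
          obtain ⟨x, hx1, hx2⟩ := hd'
          rcases hx1 with rfl | ⟨hxS, hxE⟩
          · exact absurd hET' hx2
          · refine ⟨x, hxS, ?_⟩
            rintro (⟨_, h⟩ | ⟨h, _⟩)
            · exact hxE h
            · exact hx2 h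
        obtain ⟨a, haT, b, hbd, hab⟩ := hov T hTsub hTne hTd
        have hbS : b ∈ S := hbd.1
        have hbE : ¬ b ⊆ E := fun h => hbd.2 (Or.inl ⟨hbS, h⟩)
        have hbT' : b ∈ S' \ T' := by
          refine ⟨Or.inr ⟨hbS, hbE⟩, fun h => ?_⟩
          refine hbd.2 (Or.inr ⟨h, ?_⟩)
          intro he
          rw [Set.mem_singleton_iff] at he
          subst he
          exact hbE subset_rfl
        rcases haT with ⟨_, haE⟩ | ⟨haT', _⟩
        · refine ⟨E, hET', b, hbT', ?_, hEnb b hbS, hbE⟩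
          obtain ⟨x, hx1, hx2⟩ := hab.1
          exact ⟨x, haE hx1, hx2⟩
        · exact ⟨a, haT', b, hbT', hab⟩
      · have hTsub : T' ⊆ S := by
          intro B hB
          rcases hT' hB with h | ⟨h1, _⟩
          · exact absurd (h ▸ hB) hET'
          · exact h1
        have hTd : (S \ T').Nonempty := by
          refine ⟨A, hAS, fun h => ?_⟩
          rcases hT' h with heq | ⟨_, hAE'⟩
          · exact hET' (heq ▸ h)
          · exact hAE' hAE
        obtain ⟨a, haT', b, hbd, hab⟩ := hov T' hTsub hT'ne hTd
        have haS : a ∈ S := hTsub haT'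
        have haE : ¬ a ⊆ E := by
          rcases hT' haT' with heq | ⟨_, h⟩
          · exact absurd (heq ▸ haT') hET'
          · exact h
        by_cases hbE : b ⊆ E
        · refine ⟨a, haT', E, ⟨Set.mem_insert _ _, hET'⟩, ?_, haE, hEnb a haS⟩
          obtain ⟨x, hx1, hx2⟩ := hab.1
          exact ⟨x, hx1, hbE hx2⟩
        · exact ⟨a, haT', b, ⟨Set.mem_insert_of_mem _ ⟨hbd.1, hbE⟩, hbd.2⟩, hab⟩
    have := ih S'.ncard hcard S' rfl ⟨E, Set.mem_insert _ _⟩ hS'F hov'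
    rwa [hunion] at this

/-- Let `F` be a family of subsets of a finite set which is
closed under unions of overlapping pairs. Then `M ∈ F` iff `M` is the union of a
(nonempty) overlapping collection of indecomposable elements of `F`. -/
theorem stmt10 {α : Type*} [Fintype α] (F : Set (Set α))
    (hcl : ∀ A B, A ∈ F → B ∈ F → Overlap A B → A ∪ B ∈ F) (M : Set α) :
    M ∈ F ↔
      ∃ S : Set (Set α), S.Nonempty ∧ (∀ A ∈ S, Indecomposable F A) ∧
        OverlapColl S ∧ ⋃₀ S = M := by
  constructor
  · intro hM
    exact fwd F hcl M.ncard M rfl hM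
  · rintro ⟨S, hne, hind, hov, hun⟩
    have hSF : S ⊆ F := fun A hA => (hind A hA).1
    have := bwd F hcl S.ncard S rfl hne hSF hov
    rwa [hun] at this
end

section
/- Let Z be an accessible FSM. A set M ⊆ Q is a thin module of Z if and only if there exists an overlapping collection of indecomposable thin modules of Z whose union is M. -/
open Classical

universe u v

variable {Q : Type u} {E : Type v}

section Comb

variable {α : Type*}

lemma overlap_comm {X Y : Set α} (h : Overlap X Y) : Overlap Y X :=
  ⟨Set.inter_comm X Y ▸ h.1, h.2.2, h.2.1⟩

/-- Overlap-adjacency inside a collection. -/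
def OvStep (S : Set (Set α)) (a b : Set α) : Prop := a ∈ S ∧ b ∈ S ∧ Overlap a b

lemma oc_connected {S : Set (Set α)} (h : OverlapColl S) {a b : Set α}
    (ha : a ∈ S) (hb : b ∈ S) : Relation.ReflTransGen (OvStep S) a b := by
  by_contra hnc
  set T : Set (Set α) := {c | c ∈ S ∧ Relation.ReflTransGen (OvStep S) a c} with hT
  have hTS : T ⊆ S := fun c hc => hc.1
  have haT : a ∈ T := ⟨ha, Relation.ReflTransGen.refl⟩
  have hbT : b ∈ S \ T := ⟨hb, fun hc => hnc hc.2⟩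
  obtain ⟨x, hxT, y, hyT, hxy⟩ := h T hTS ⟨a, haT⟩ ⟨b, hbT⟩
  exact hyT.2 ⟨hyT.1, hxT.2.tail ⟨hxT.1, hyT.1, hxy⟩⟩

lemma crossing {S T : Set (Set α)} (hTS : T ⊆ S) {a b : Set α}
    (h : Relation.ReflTransGen (OvStep S) a b) (haT : a ∈ T) (hbT : b ∉ T) :
    ∃ x ∈ T, ∃ y ∈ S \ T, Overlap x y := by
  induction h with
  | refl => exact absurd haT hbT
  | tail _ hstep ih =>
    rename_i c d _
    by_cases hc : c ∈ T
    · exact ⟨c, hc, d, ⟨hstep.2.1, hbT⟩, hstep.2.2⟩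
    · exact ih hc

lemma connected_oc {S : Set (Set α)}
    (h : ∀ a ∈ S, ∀ b ∈ S, Relation.ReflTransGen (OvStep S) a b) :
    OverlapColl S := by
  intro T hTS hTne hSTne
  obtain ⟨a, haT⟩ := hTne
  obtain ⟨b, hbS, hbT⟩ := hSTne
  exact crossing hTS (h a (hTS haT) b hbS) haT hbT

/-- If two unions overlap, some members coincide or overlap. -/
lemma cross_members_aux {SA SB : Set (Set α)} (hA : OverlapColl SA)
    {a₀ b₀ : Set α} (ha₀ : a₀ ∈ SA) (hb₀ : b₀ ∈ SB) (hsub : a₀ ⊆ b₀)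
    (hAB : ¬ ⋃₀ SA ⊆ ⋃₀ SB)
    (hno : ∀ a ∈ SA, ∀ b ∈ SB, a ≠ b ∧ ¬ Overlap a b) : False := by
  obtain ⟨p, hpA, hpB⟩ := Set.not_subset.mp hAB
  obtain ⟨a₁, ha₁, hpa₁⟩ := hpA
  have key : ∀ c, Relation.ReflTransGen (OvStep SA) a₀ c → c ⊆ b₀ := by
    intro c hc
    induction hc with
    | refl => exact hsub
    | tail _ hstep ih =>
      rename_i c d _
      have hcb : c ⊆ b₀ := ih
      have hd : d ∈ SA := hstep.2.1
      obtain ⟨hne, hnov⟩ := hno d hd b₀ hb₀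
      have hint : (d ∩ b₀).Nonempty := by
        obtain ⟨q, hq1, hq2⟩ := hstep.2.2.1
        exact ⟨q, hq2, hcb hq1⟩
      by_contra hnsub
      -- then b₀ ⊆ d (since not overlap, nonempty inter, not d ⊆ b₀)
      have hb0d : b₀ ⊆ d := by
        by_contra hb0d
        exact hnov ⟨hint, hnsub, hb0d⟩
      exact hstep.2.2.2.1 (hcb.trans hb0d)
  have : a₁ ⊆ b₀ := key a₁ (oc_connected hA ha₀ ha₁)
  exact hpB ⟨b₀, hb₀, this hpa₁⟩

lemma cross_members {SA SB : Set (Set α)} (hA : OverlapColl SA) (hB : OverlapColl SB)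
    (hov : Overlap (⋃₀ SA) (⋃₀ SB)) :
    ∃ a ∈ SA, ∃ b ∈ SB, a = b ∨ Overlap a b := by
  by_contra hno
  push_neg at hno
  obtain ⟨⟨p, hpA, hpB⟩, hAB, hBA⟩ := hov
  obtain ⟨a₀, ha₀, hpa₀⟩ := hpA
  obtain ⟨b₀, hb₀, hpb₀⟩ := hpB
  obtain ⟨hne, hnov⟩ := hno a₀ ha₀ b₀ hb₀
  have hint : (a₀ ∩ b₀).Nonempty := ⟨p, hpa₀, hpb₀⟩
  by_cases hsub : a₀ ⊆ b₀
  · exact cross_members_aux hA ha₀ hb₀ hsub hAB hno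
  · have hsub' : b₀ ⊆ a₀ := by
      by_contra h'
      exact hnov ⟨hint, hsub, h'⟩
    refine cross_members_aux hB hb₀ ha₀ hsub' hBA ?_
    intro b hb a ha
    obtain ⟨h1, h2⟩ := hno a ha b hb
    exact ⟨fun h => h1 h.symm, fun h => h2 (overlap_comm h)⟩

end Comb

section Glue
variable {α : Type*}

lemma ovstep_mono {S S' : Set (Set α)} (h : S ⊆ S') {a b : Set α} :
    OvStep S a b → OvStep S' a b := fun hs => ⟨h hs.1, h hs.2.1, hs.2.2⟩

lemma glue_oc {S : Set (Set α)} (hS : OverlapColl S) (f : Set α → Set (Set α))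
    (hf : ∀ A ∈ S, OverlapColl (f A) ∧ (f A).Nonempty ∧ ⋃₀ (f A) = A) :
    OverlapColl {C | ∃ A ∈ S, C ∈ f A} := by
  set S' : Set (Set α) := {C | ∃ A ∈ S, C ∈ f A} with hS'
  have hsub : ∀ A ∈ S, f A ⊆ S' := fun A hA C hC => ⟨A, hA, hC⟩
  apply connected_oc
  rintro c ⟨A, hA, hcA⟩ d ⟨B, hB, hdB⟩
  have path : Relation.ReflTransGen (OvStep S) A B := oc_connected hS hA hB
  clear hB
  induction path generalizing d with
  | refl =>
    exact Relation.ReflTransGen.mono (fun _ _ => ovstep_mono (hsub A hA)) _ _ (oc_connected (hf A hA).1 hcA hdB)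
  | @tail P B' hPp hstep ih =>
    have hP : P ∈ S := hstep.1
    have hB' : B' ∈ S := hstep.2.1
    have hov : Overlap (⋃₀ f P) (⋃₀ f B') := by
      rw [(hf P hP).2.2, (hf B' hB').2.2]; exact hstep.2.2
    obtain ⟨e, heP, g, hgB', heg⟩ := cross_members (hf P hP).1 (hf B' hB').1 hov
    have h1 : Relation.ReflTransGen (OvStep S') c e := ih e heP
    have h2 : Relation.ReflTransGen (OvStep S') g d :=
      Relation.ReflTransGen.mono
        (fun _ _ => ovstep_mono (hsub B' hB')) _ _ (oc_connected (hf B' hB').1 hgB' hdB)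
    rcases heg with rfl | hov'
    · exact h1.trans h2
    · exact (h1.tail ⟨hsub P hP heP, hsub B' hB' hgB', hov'⟩).trans h2
end Glue

section Fsm1
variable [Fintype Q] {δ : Q → E → Option Q} {x : E}

/-- one `x`-step inside `X` -/
def XStep (δ : Q → E → Option Q) (x : E) (X : Set Q) (p q : Q) : Prop :=
  p ∈ X ∧ δ p x = some q

lemma hasXCycle_mono {X Y : Set Q} (h : X ⊆ Y) (hc : HasXCycleIn δ x X) :
    HasXCycleIn δ x Y := by
  obtain ⟨q, hq, hcyc⟩ := hc
  exact ⟨q, h hq, Relation.TransGen.mono (fun a b (hab : a ∈ X ∧ δ a x = some b) => (⟨h hab.1, hab.2⟩ : a ∈ Y ∧ δ a x = some b)) _ _ hcyc⟩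

lemma cyc_of_closed {D : Set Q} (h : ∀ d ∈ D, ∃ d' ∈ D, δ d x = some d')
    {d₀ : Q} (hd₀ : d₀ ∈ D) : HasXCycleIn δ x D := by
  classical
  set F : Q → Q := fun q => if hq : q ∈ D then Classical.choose (h q hq) else q with hF
  have hFD : ∀ q ∈ D, F q ∈ D ∧ δ q x = some (F q) := by
    intro q hq
    simp only [hF, dif_pos hq]
    exact ⟨(Classical.choose_spec (h q hq)).1, (Classical.choose_spec (h q hq)).2⟩
  have hiter : ∀ n, F^[n] d₀ ∈ D := by
    intro n
    induction n with
    | zero => exact hd₀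
    | succ n ih => rw [Function.iterate_succ_apply']; exact (hFD _ ih).1
  have hstep : ∀ n, XStep δ x D (F^[n] d₀) (F^[n+1] d₀) := by
    intro n
    rw [Function.iterate_succ_apply']
    exact ⟨hiter n, (hFD _ (hiter n)).2⟩
  have htg : ∀ m k, Relation.TransGen (XStep δ x D) (F^[m] d₀) (F^[m+k+1] d₀) := by
    intro m k
    induction k with
    | zero => exact Relation.TransGen.single (hstep m)
    | succ k ih => exact ih.tail (hstep (m+k+1))
  have key : ∀ m n, m < n → F^[m] d₀ = F^[n] d₀ → HasXCycleIn δ x D := by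
    intro m n hlt heq2
    obtain ⟨k, rfl⟩ := Nat.exists_eq_add_of_lt hlt
    have h := htg m k
    rw [← heq2] at h
    exact ⟨F^[m] d₀, hiter m, h⟩
  obtain ⟨m, n, hmn, heq⟩ := Finite.exists_ne_map_eq_of_infinite (fun n => F^[n] d₀)
  have heq2 : F^[m] d₀ = F^[n] d₀ := heq
  rcases Nat.lt_or_ge m n with hlt | hge
  · exact key m n hlt heq2
  · exact key n m (lt_of_le_of_ne hge (fun h => hmn h.symm)) heq2.symm

lemma traj {X : Set Q} (htot : ∀ p ∈ X, (δ p x).isSome)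
    (hnc : ¬ HasXCycleIn δ x X) {c : Q} (hc : c ∈ X) :
    ∃ t w, t ∈ X ∧ Relation.ReflTransGen (XStep δ x X) c t ∧
      δ t x = some w ∧ w ∉ X := by
  by_contra hno
  push_neg at hno
  set D : Set Q := {q | q ∈ X ∧ Relation.ReflTransGen (XStep δ x X) c q} with hD
  have hclosed : ∀ d ∈ D, ∃ d' ∈ D, δ d x = some d' := by
    rintro d ⟨hdX, hdr⟩
    obtain ⟨w, hw⟩ := Option.isSome_iff_exists.mp (htot d hdX)
    have hwX : w ∈ X := by
      by_contra hwX
      exact hwX (hno d w hdX hdr hw)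
    exact ⟨w, ⟨hwX, hdr.tail ⟨hdX, hw⟩⟩, hw⟩
  have : HasXCycleIn δ x D := cyc_of_closed hclosed ⟨hc, Relation.ReflTransGen.refl⟩
  exact hnc (hasXCycle_mono (fun q hq => hq.1) this)
end Fsm1

section Fsm2
variable {δ : Q → E → Option Q} {s : Q}

/-- a step staying inside `X` -/
def InStep (δ : Q → E → Option Q) (X : Set Q) (u v : Q) : Prop :=
  u ∈ X ∧ v ∈ X ∧ FsmStep δ u v

lemma last_entry {X : Set Q} {a : Q} (h : Reaches δ s a) (ha : a ∈ X) :
    ∃ σ, ((s ∈ X ∧ σ = s) ∨ IsEntrance δ X σ) ∧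
      Relation.ReflTransGen (InStep δ X) σ a := by
  induction h with
  | refl => exact ⟨s, Or.inl ⟨ha, rfl⟩, Relation.ReflTransGen.refl⟩
  | @tail b c hsb hbc ih =>
    by_cases hb : b ∈ X
    · obtain ⟨σ, hσ, hrtg⟩ := ih hb
      exact ⟨σ, hσ, hrtg.tail ⟨hb, ha, hbc⟩⟩
    · obtain ⟨x, hx⟩ := hbc
      exact ⟨c, Or.inr ⟨ha, x, b, hb, hx⟩, Relation.ReflTransGen.refl⟩

/-- start node of a module, with all its properties -/
lemma start_node {X : Set Q} (hacc : Accessible δ s) (hmod : IsFsmModule δ s X) :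
    ∃ σ, σ ∈ X ∧ (s ∈ X → σ = s) ∧ (∀ u, IsEntrance δ X u → u = σ) ∧
      ∀ a ∈ X, Relation.ReflTransGen (InStep δ X) σ a := by
  obtain ⟨hne, hcoin, hscond, _⟩ := hmod
  by_cases hs : s ∈ X
  · refine ⟨s, hs, fun _ => rfl, fun u hu => hscond hs u hu, ?_⟩
    intro a haX
    obtain ⟨σ, hσ, hrtg⟩ := last_entry (hacc a) haX
    rcases hσ with ⟨_, rfl⟩ | hent
    · exact hrtg
    · rw [hscond hs σ hent] at hrtg; exact hrtg
  · obtain ⟨a₀, ha₀⟩ := hne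
    obtain ⟨σ₀, hσ₀, _⟩ := last_entry (hacc a₀) ha₀
    rcases hσ₀ with ⟨hsX, _⟩ | hent₀
    · exact absurd hsX hs
    · refine ⟨σ₀, hent₀.1, fun hsX => absurd hsX hs,
        fun u hu => hcoin u σ₀ hu hent₀, ?_⟩
      intro a haX
      obtain ⟨σ, hσ, hrtg⟩ := last_entry (hacc a) haX
      rcases hσ with ⟨hsX, _⟩ | hent
      · exact absurd hsX hs
      · rw [hcoin σ σ₀ hent hent₀] at hrtg; exact hrtg

lemma path_enters {A B : Set Q} {p q : Q}
    (h : Relation.ReflTransGen (InStep δ B) p q) (hq : q ∈ A) :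
    p ∈ A ∨ ∃ u ∈ B, IsEntrance δ A u := by
  induction h with
  | refl => exact Or.inl hq
  | @tail b c hpb hbc ih =>
    by_cases hbA : b ∈ A
    · exact ih hbA
    · obtain ⟨x, hx⟩ := hbc.2.2
      exact Or.inr ⟨c, hbc.2.1, hq, x, b, hbA, hx⟩

lemma sigma_mem {A B : Set Q} {σA σB c₀ : Q} (hc₀ : c₀ ∈ A ∩ B)
    (hσA : ∀ u, IsEntrance δ A u → u = σA)
    (hσBreach : ∀ a ∈ B, Relation.ReflTransGen (InStep δ B) σB a) :
    σA ∈ B ∨ σB ∈ A := by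
  rcases path_enters (hσBreach c₀ hc₀.2) hc₀.1 with h | ⟨u, huB, huE⟩
  · exact Or.inr h
  · rw [hσA u huE] at huB; exact Or.inl huB

lemma union_entrance {A B : Set Q} {σA σB : Q}
    (hσA : ∀ u, IsEntrance δ A u → u = σA)
    (hσB : ∀ u, IsEntrance δ B u → u = σB)
    (hσAB : σA ∈ B) :
    ∀ u, IsEntrance δ (A ∪ B) u → u = σB := by
  rintro u ⟨huM, x, v, hv, hvx⟩
  have hvA : v ∉ A := fun h => hv (Or.inl h)
  have hvB : v ∉ B := fun h => hv (Or.inr h)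
  have huB : u ∈ B := by
    rcases huM with huA | huB
    · rw [hσA u ⟨huA, x, v, hvA, hvx⟩]; exact hσAB
    · exact huB
  exact hσB u ⟨huB, x, v, hvB, hvx⟩
end Fsm2

section Fsm3
variable [Fintype Q] {δ : Q → E → Option Q} {x : E}

lemma exit_or_exit_in {A B : Set Q} {c₀ : Q} (hc₀ : c₀ ∈ A ∩ B)
    (htotA : ∀ p ∈ A, (δ p x).isSome) (hncA : ¬ HasXCycleIn δ x A) :
    (∃ v, IsExit δ B x v) ∨ (∃ v ∈ B, IsExit δ A x v) := by
  by_contra hno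
  push_neg at hno
  obtain ⟨hnoB, hnoA⟩ := hno
  have hclosed : ∀ d ∈ A ∩ B, ∃ d' ∈ A ∩ B, δ d x = some d' := by
    rintro d ⟨hdA, hdB⟩
    obtain ⟨w, hw⟩ := Option.isSome_iff_exists.mp (htotA d hdA)
    have hwB : w ∈ B := by
      by_contra hwB
      exact hwB ((hnoB w ⟨hwB, d, hdB, hw⟩).elim)
    have hwA : w ∈ A := by
      by_contra hwA
      exact hnoA w hwB ⟨hwA, d, hdA, hw⟩
    exact ⟨w, ⟨hwA, hwB⟩, hw⟩
  exact hncA (hasXCycle_mono Set.inter_subset_left (cyc_of_closed hclosed hc₀))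

lemma traj_invariant {A B : Set Q} {c₀ t : Q} (hc₀ : c₀ ∈ A ∩ B)
    (h : Relation.ReflTransGen (XStep δ x A) c₀ t) (ht : t ∈ A) :
    t ∈ B ∨ ∃ z ∈ A, IsExit δ B x z := by
  induction h with
  | refl => exact Or.inl hc₀.2
  | @tail q t' hq hstep ih =>
    rcases ih hstep.1 with hqB | hdone
    · by_cases ht'B : t' ∈ B
      · exact Or.inl ht'B
      · exact Or.inr ⟨t', ht, ⟨ht'B, q, hqB, hstep.2⟩⟩
    · exact Or.inr hdone

lemma cross_exit_eq {A B : Set Q} {c₀ w1 w2 : Q} (hc₀ : c₀ ∈ A ∩ B)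
    (htotA : ∀ p ∈ A, (δ p x).isSome) (hncA : ¬ HasXCycleIn δ x A)
    (hAuniq : ∀ v w : Q, IsExit δ A x v → IsExit δ A x w → v = w)
    (hBuniq : ∀ v w : Q, IsExit δ B x v → IsExit δ B x w → v = w)
    (hw1 : IsExit δ A x w1) (hw1M : w1 ∉ A ∪ B)
    (hw2 : IsExit δ B x w2) (hw2M : w2 ∉ A ∪ B) : w1 = w2 := by
  obtain ⟨t, w, htA, hrtg, hw, hwA⟩ := traj htotA hncA hc₀.1
  rcases traj_invariant hc₀ hrtg htA with htB | ⟨z, hzA, hz⟩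
  · have hwex : IsExit δ A x w := ⟨hwA, t, htA, hw⟩
    have hww1 : w = w1 := hAuniq w w1 hwex hw1
    have hwB : w ∉ B := by rw [hww1]; exact fun h => hw1M (Or.inr h)
    have hwex2 : IsExit δ B x w := ⟨hwB, t, htB, hw⟩
    rw [← hww1]
    exact hBuniq w w2 hwex2 hw2
  · have : z = w2 := hBuniq z w2 hz hw2
    rw [this] at hzA
    exact absurd (Or.inl hzA) hw2M

lemma tg_src {M : Set Q} {p q : Q}
    (h : Relation.TransGen (fun a b => a ∈ M ∧ δ a x = some b) p q) : p ∈ M := by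
  induction h with
  | single h => exact h.1
  | tail _ _ ih => exact ih

end Fsm3

section Fsm3b
variable [Fintype Q] {δ : Q → E → Option Q} {x : E}

lemma cycle_in_A {A B : Set Q}
    (hclosedA : ∀ p ∈ A, ∀ q, δ p x = some q → q ∈ A ∪ B → q ∈ A)
    {p q : Q} (h : Relation.TransGen (fun a b => a ∈ A ∪ B ∧ δ a x = some b) p q) :
    q ∈ A ∪ B → p ∈ A →
    Relation.TransGen (fun a b => a ∈ A ∧ δ a x = some b) p q ∧ q ∈ A := by
  induction h with
  | single h =>
    intro hq hp
    have := hclosedA p hp _ h.2 hq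
    exact ⟨Relation.TransGen.single ⟨hp, h.2⟩, this⟩
  | @tail b c htg hbc ih =>
    intro hq hp
    obtain ⟨htg', hbA⟩ := ih hbc.1 hp
    have hcA : c ∈ A := hclosedA b hbA _ hbc.2 hq
    exact ⟨htg'.tail ⟨hbA, hbc.2⟩, hcA⟩

lemma cycle_avoid_A {A B : Set Q}
    (hclosedA : ∀ p ∈ A, ∀ q, δ p x = some q → q ∈ A ∪ B → q ∈ A)
    {p q : Q} (h : Relation.TransGen (fun a b => a ∈ A ∪ B ∧ δ a x = some b) p q)
    (hqM : q ∈ A ∪ B) (hq : q ∉ A) :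
    p ∉ A ∧ Relation.TransGen (fun a b => a ∈ B ∧ δ a x = some b) p q := by
  induction h using Relation.TransGen.head_induction_on with
  | single h =>
    rename_i p'
    have hpA : p' ∉ A := fun hpA => hq (hclosedA p' hpA _ h.2 hqM)
    have hpB : p' ∈ B := h.1.resolve_left hpA
    exact ⟨hpA, Relation.TransGen.single ⟨hpB, h.2⟩⟩
  | head h' htl ih =>
    rename_i a p'
    have hp'M : p' ∈ A ∪ B := tg_src htl
    obtain ⟨hp'A, htgB⟩ := ih
    have haA : a ∉ A := fun haA => hp'A (hclosedA a haA _ h'.2 hp'M)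
    have haB : a ∈ B := h'.1.resolve_left haA
    exact ⟨haA, htgB.head ⟨haB, h'.2⟩⟩

lemma no_cycle_union {A B : Set Q}
    (hclosedA : ∀ p ∈ A, ∀ q, δ p x = some q → q ∈ A ∪ B → q ∈ A)
    (hncA : ¬ HasXCycleIn δ x A) (hncB : ¬ HasXCycleIn δ x B) :
    ¬ HasXCycleIn δ x (A ∪ B) := by
  rintro ⟨z, hz, hcyc⟩
  by_cases hzA : z ∈ A
  · exact hncA ⟨z, hzA, (cycle_in_A hclosedA hcyc hz hzA).1⟩
  · obtain ⟨_, htgB⟩ := cycle_avoid_A hclosedA hcyc hz hzA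
    exact hncB ⟨z, hz.resolve_left hzA, htgB⟩
end Fsm3b

section Fsm4
variable [Fintype Q] {δ : Q → E → Option Q} {s : Q}

lemma union_entrance_props {A B : Set Q} {σA σB : Q}
    (hσAs : s ∈ A → σA = s) (hσA : ∀ u, IsEntrance δ A u → u = σA)
    (hσBs : s ∈ B → σB = s) (hσB : ∀ u, IsEntrance δ B u → u = σB)
    (hσAB : σA ∈ B) :
    (∀ u v, IsEntrance δ (A ∪ B) u → IsEntrance δ (A ∪ B) v → u = v) ∧
    (s ∈ A ∪ B → ∀ u, IsEntrance δ (A ∪ B) u → u = s) := by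
  have h1 := union_entrance hσA hσB hσAB
  constructor
  · intro u v hu hv; rw [h1 u hu, h1 v hv]
  · intro hs u hu
    rw [h1 u hu]
    rcases hs with hsA | hsB
    · exact hσBs (by rw [← hσAs hsA]; exact hσAB)
    · exact hσBs hsB

/-- per-letter exit analysis for the union of two overlapping thin modules -/
lemma union_exit_key {A B : Set Q} {x : E} {c₀ : Q} (hc₀ : c₀ ∈ A ∩ B)
    (hA : IsThinModule δ s A) (hB : IsThinModule δ s B)
    (hex : ∃ v, IsExit δ (A ∪ B) x v) :
    (∀ v w : Q, IsExit δ (A ∪ B) x v → IsExit δ (A ∪ B) x w → v = w) ∧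
    (∀ u ∈ A ∪ B, (δ u x).isSome) ∧ ¬ HasXCycleIn δ x (A ∪ B) := by
  obtain ⟨w, hwM, u, huM, hw⟩ := hex
  have hwA : w ∉ A := fun h => hwM (Or.inl h)
  have hwB : w ∉ B := fun h => hwM (Or.inr h)
  have hc₀' : c₀ ∈ B ∩ A := ⟨hc₀.2, hc₀.1⟩
  -- both A and B have x-exits
  have hboth : (∃ v, IsExit δ A x v) ∧ (∃ v, IsExit δ B x v) := by
    rcases huM with huA | huB
    · have hAex : ∃ v, IsExit δ A x v := ⟨w, hwA, u, huA, hw⟩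
      obtain ⟨huniqA, htotA⟩ := hA.1.2.2.2 x hAex
      have hncA : ¬ HasXCycleIn δ x A := (hA.2 x).resolve_left (not_not_intro hAex)
      refine ⟨hAex, ?_⟩
      rcases exit_or_exit_in hc₀ htotA hncA with h | ⟨v, hvB, hv⟩
      · exact h
      · rw [huniqA v w hv ⟨hwA, u, huA, hw⟩] at hvB
        exact absurd hvB hwB
    · have hBex : ∃ v, IsExit δ B x v := ⟨w, hwB, u, huB, hw⟩
      obtain ⟨huniqB, htotB⟩ := hB.1.2.2.2 x hBex
      have hncB : ¬ HasXCycleIn δ x B := (hB.2 x).resolve_left (not_not_intro hBex)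
      refine ⟨?_, hBex⟩
      rcases exit_or_exit_in hc₀' htotB hncB with h | ⟨v, hvA, hv⟩
      · exact h
      · rw [huniqB v w hv ⟨hwB, u, huB, hw⟩] at hvA
        exact absurd hvA hwA
  obtain ⟨hAex, hBex⟩ := hboth
  obtain ⟨huniqA, htotA⟩ := hA.1.2.2.2 x hAex
  obtain ⟨huniqB, htotB⟩ := hB.1.2.2.2 x hBex
  have hncA : ¬ HasXCycleIn δ x A := (hA.2 x).resolve_left (not_not_intro hAex)
  have hncB : ¬ HasXCycleIn δ x B := (hB.2 x).resolve_left (not_not_intro hBex)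
  -- any exit of M is an exit of A or of B
  have hside : ∀ v : Q, IsExit δ (A ∪ B) x v → IsExit δ A x v ∨ IsExit δ B x v := by
    rintro v ⟨hvM, u', hu'M, hu'⟩
    rcases hu'M with h | h
    · exact Or.inl ⟨fun hh => hvM (Or.inl hh), u', h, hu'⟩
    · exact Or.inr ⟨fun hh => hvM (Or.inr hh), u', h, hu'⟩
  refine ⟨?_, ?_, ?_⟩
  · -- uniqueness
    intro v v' hv hv'
    have hvM := hv.1
    have hv'M := hv'.1
    rcases hside v hv with hvA' | hvB' <;> rcases hside v' hv' with hv'A | hv'B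
    · exact huniqA v v' hvA' hv'A
    · exact cross_exit_eq hc₀ htotA hncA huniqA huniqB hvA' hvM hv'B hv'M
    · exact (cross_exit_eq hc₀ htotA hncA huniqA huniqB hv'A hv'M hvB' hvM).symm
    · exact huniqB v v' hvB' hv'B
  · intro u' hu'
    rcases hu' with h | h
    · exact htotA u' h
    · exact htotB u' h
  · -- thinness
    have hwex : IsExit δ (A ∪ B) x w := ⟨hwM, u, huM, hw⟩
    rcases hside w hwex with hwA' | hwB'
    · have hclosedA : ∀ p ∈ A, ∀ q, δ p x = some q → q ∈ A ∪ B → q ∈ A := by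
        intro p hp q hq hqM
        by_contra hqA
        have : q = w := huniqA q w ⟨hqA, p, hp, hq⟩ hwA'
        rw [this] at hqM
        exact hwM hqM
      exact no_cycle_union hclosedA hncA hncB
    · have hclosedB : ∀ p ∈ B, ∀ q, δ p x = some q → q ∈ B ∪ A → q ∈ B := by
        intro p hp q hq hqM
        by_contra hqB
        have : q = w := huniqB q w ⟨hqB, p, hp, hq⟩ hwB'
        rw [this] at hqM
        rcases hqM with h | h
        · exact hwB h
        · exact hwA h
      rw [Set.union_comm]
      exact no_cycle_union hclosedB hncB hncA

lemma pair_union (hacc : Accessible δ s) {A B : Set Q}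
    (hA : IsThinModule δ s A) (hB : IsThinModule δ s B) (hov : Overlap A B) :
    IsThinModule δ s (A ∪ B) := by
  obtain ⟨c₀, hc₀⟩ := hov.1
  obtain ⟨σA, hσAmem, hσAs, hσAuniq, hσAreach⟩ := start_node hacc hA.1
  obtain ⟨σB, hσBmem, hσBs, hσBuniq, hσBreach⟩ := start_node hacc hB.1
  have hent : (∀ u v, IsEntrance δ (A ∪ B) u → IsEntrance δ (A ∪ B) v → u = v) ∧
      (s ∈ A ∪ B → ∀ u, IsEntrance δ (A ∪ B) u → u = s) := by
    rcases sigma_mem hc₀ hσAuniq hσBreach with h | h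
    · exact union_entrance_props hσAs hσAuniq hσBs hσBuniq h
    · have := union_entrance_props hσBs hσBuniq hσAs hσAuniq h
      rw [Set.union_comm B A] at this
      exact this
  refine ⟨⟨⟨c₀, Or.inl hc₀.1⟩, hent.1, hent.2, ?_⟩, ?_⟩
  · intro x hex
    obtain ⟨h1, h2, _⟩ := union_exit_key hc₀ hA hB hex
    exact ⟨h1, h2⟩
  · intro x
    by_cases hex : ∃ v, IsExit δ (A ∪ B) x v
    · exact Or.inr (union_exit_key hc₀ hA hB hex).2.2
    · exact Or.inl hex
end Fsm4

section Fsm5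
variable [Fintype Q] {δ : Q → E → Option Q} {s : Q}

lemma sUnion_thin (hacc : Accessible δ s) {S : Set (Set Q)}
    (hS : ∀ A ∈ S, IsThinModule δ s A) (hoc : OverlapColl S) (hne : S.Nonempty) :
    IsThinModule δ s (⋃₀ S) := by
  obtain ⟨A₀, hA₀⟩ := hne
  have key : ∀ n (T : Set (Set Q)), T ⊆ S → T.Nonempty → (S \ T).ncard ≤ n →
      IsThinModule δ s (⋃₀ T) → IsThinModule δ s (⋃₀ S) := by
    intro n
    induction n with
    | zero =>
      intro T hTS _ hcard hthin
      have : S \ T = ∅ := (Set.ncard_eq_zero (Set.toFinite _)).mp (Nat.le_zero.mp hcard)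
      have hST : S = T := le_antisymm (Set.diff_eq_empty.mp this) hTS
      rw [hST]; exact hthin
    | succ n ih =>
      intro T hTS hTne hcard hthin
      by_cases hempty : S \ T = ∅
      · have hST : S = T := le_antisymm (Set.diff_eq_empty.mp hempty) hTS
        rw [hST]; exact hthin
      · obtain ⟨a, haT, b, hbST, hov⟩ :=
          hoc T hTS hTne (Set.nonempty_iff_ne_empty.mpr hempty)
        have hsub' : insert b T ⊆ S := Set.insert_subset hbST.1 hTS
        have hdiffeq : S \ insert b T = (S \ T) \ {b} := by
          ext c; simp [Set.mem_diff, Set.mem_insert_iff]; tauto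
        have hcard' : (S \ insert b T).ncard ≤ n := by
          rw [hdiffeq]
          have := Set.ncard_diff_singleton_lt_of_mem hbST (Set.toFinite (S \ T))
          omega
        have hthin' : IsThinModule δ s (⋃₀ insert b T) := by
          rw [Set.sUnion_insert]
          by_cases hbU : b ⊆ ⋃₀ T
          · rw [Set.union_eq_self_of_subset_left hbU]; exact hthin
          · have hovU : Overlap b (⋃₀ T) := by
              refine ⟨?_, hbU, ?_⟩
              · obtain ⟨q, hqa, hqb⟩ := hov.1
                exact ⟨q, hqb, a, haT, hqa⟩
              · intro hUb
                exact hov.2.1 ((Set.subset_sUnion_of_mem haT).trans hUb)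
            exact pair_union hacc (hS b hbST.1) hthin hovU
        exact ih (insert b T) hsub' ⟨b, Set.mem_insert b T⟩ hcard' hthin'
  refine key ((S \ {A₀}).ncard) {A₀} (Set.singleton_subset_iff.mpr hA₀)
    ⟨A₀, rfl⟩ le_rfl ?_
  rw [Set.sUnion_singleton]
  exact hS A₀ hA₀

lemma thin_decomp (hacc : Accessible δ s) :
    ∀ n (M : Set Q), M.ncard ≤ n → IsThinModule δ s M →
      ∃ S : Set (Set Q), S.Nonempty ∧ (∀ A ∈ S, IndecompThin δ s A) ∧
        OverlapColl S ∧ ⋃₀ S = M := by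
  intro n
  induction n with
  | zero =>
    intro M hcard hthin
    have : M = ∅ := (Set.ncard_eq_zero (Set.toFinite _)).mp (Nat.le_zero.mp hcard)
    rw [this] at hthin
    exact absurd hthin.1.1 (by simp)
  | succ n ih =>
    intro M hcard hthin
    by_cases hind : Decomposable {N : Set Q | IsThinModule δ s N} M
    · obtain ⟨S, hSF, hoc, hunion, a, haS, b, hbS, hab⟩ := hind
      have hMS : M ∉ S := by
        intro hMS
        have hSne' : (S \ {M}).Nonempty := by
          by_cases haM : a = M
          · refine ⟨b, hbS, ?_⟩
            rw [Set.mem_singleton_iff, ← haM]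
            exact fun h => hab h.symm
          · exact ⟨a, haS, by simp [haM]⟩
        obtain ⟨p, hpT, q, hqST, hovpq⟩ :=
          hoc {M} (Set.singleton_subset_iff.mpr hMS) ⟨M, rfl⟩ hSne'
        have hq : q ⊆ M := hunion ▸ Set.subset_sUnion_of_mem hqST.1
        rw [Set.mem_singleton_iff] at hpT
        rw [hpT] at hovpq
        exact hovpq.2.2 hq
      have hsmall : ∀ A ∈ S, A.ncard ≤ n := by
        intro A hA
        have hsub : A ⊆ M := hunion ▸ Set.subset_sUnion_of_mem hA
        have hne : A ≠ M := fun h => hMS (h ▸ hA)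
        have := Set.ncard_lt_ncard (Set.ssubset_iff_subset_ne.mpr ⟨hsub, hne⟩)
          (Set.toFinite M)
        omega
      have hchoice : ∀ A : Set Q, ∃ SA : Set (Set Q), A ∈ S →
          SA.Nonempty ∧ (∀ C ∈ SA, IndecompThin δ s C) ∧ OverlapColl SA ∧ ⋃₀ SA = A := by
        intro A
        by_cases hA : A ∈ S
        · obtain ⟨SA, h1, h2, h3, h4⟩ := ih A (hsmall A hA) (hSF hA)
          exact ⟨SA, fun _ => ⟨h1, h2, h3, h4⟩⟩
        · exact ⟨∅, fun h => absurd h hA⟩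
      choose f hf using hchoice
      refine ⟨{C | ∃ A ∈ S, C ∈ f A}, ?_, ?_, ?_, ?_⟩
      · obtain ⟨C, hC⟩ := (hf a haS).1
        exact ⟨C, a, haS, hC⟩
      · rintro C ⟨A, hA, hC⟩
        exact (hf A hA).2.1 C hC
      · exact glue_oc hoc f (fun A hA => ⟨(hf A hA).2.2.1, (hf A hA).1, (hf A hA).2.2.2⟩)
      · ext q
        simp only [Set.mem_sUnion, Set.mem_setOf_eq]
        constructor
        · rintro ⟨C, ⟨A, hA, hC⟩, hq⟩
          have : q ∈ ⋃₀ f A := ⟨C, hC, hq⟩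
          rw [(hf A hA).2.2.2] at this
          exact hunion ▸ ⟨A, hA, this⟩
        · intro hq
          rw [← hunion] at hq
          obtain ⟨A, hA, hqA⟩ := hq
          have : q ∈ ⋃₀ f A := ((hf A hA).2.2.2).symm ▸ hqA
          obtain ⟨C, hC, hqC⟩ := this
          exact ⟨C, ⟨A, hA, hC⟩, hqC⟩
    · refine ⟨{M}, ⟨M, rfl⟩, ?_, ?_, Set.sUnion_singleton M⟩
      · rintro A hA
        rw [Set.mem_singleton_iff] at hA
        rw [hA]
        exact ⟨hthin, hind⟩
      · intro T hTS ⟨t, ht⟩ ⟨c, hcS, hcT⟩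
        have htM : t = M := hTS ht
        have hcM : c = M := hcS
        rw [htM] at ht
        rw [hcM] at hcT
        exact absurd ht hcT
end Fsm5


/-- In an accessible FSM, `M ⊆ Q` is a thin module iff there is a
(nonempty) overlapping collection of indecomposable thin modules whose union is
`M`. -/
theorem stmt14 [Fintype Q] (δ : Q → E → Option Q) (s : Q) (hacc : Accessible δ s)
    (M : Set Q) :
    IsThinModule δ s M ↔
      ∃ S : Set (Set Q), S.Nonempty ∧ (∀ A ∈ S, IndecompThin δ s A) ∧
        OverlapColl S ∧ ⋃₀ S = M := by
  constructor
  · intro hthin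
    exact thin_decomp hacc M.ncard M le_rfl hthin
  · rintro ⟨S, hne, hind, hoc, rfl⟩
    exact sUnion_thin hacc (fun A hA => (hind A hA).1) hoc hne
end
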